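/- arXiv:1408.1681 — 6 statements merged into one kernel-verified Lean document; each statement's English description precedes it below -/
import Mathlib

section
/- For every integer ℓ ≥ 4, every integer r ≥ 1, and every real x with |x| ≤ 1/ℓ, the Fejér kernel satisfies 1 − 12 r ℓ² x² ≤ K_ℓ(x)^r ≤ 1 − ℓ² x² / 3. -/
open Real

lemma abs_exp_I_sub_one (θ : ℝ) :
    ‖Complex.exp (θ * Complex.I) - 1‖ = 2 * |Real.sin (θ / 2)| := by
  have h1 : Complex.exp (θ * Complex.I) - 1
      = Complex.ofReal (Real.cos θ - 1) + Complex.ofReal (Real.sin θ) * Complex.I := by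
    rw [Complex.exp_mul_I]
    rw [← Complex.ofReal_cos, ← Complex.ofReal_sin]
    push_cast
    ring
  rw [h1, Complex.norm_add_mul_I]
  have h2 : Real.sin (θ / 2) ^ 2 = 1 / 2 - Real.cos θ / 2 := by
    have := Real.sin_sq_eq_half_sub (θ / 2)
    rw [show 2*(θ/2) = θ by ring] at this
    simpa using this
  have h3 : (Real.cos θ - 1) ^ 2 + Real.sin θ ^ 2 = (2 * |Real.sin (θ / 2)|) ^ 2 := by
    have hc := Real.sin_sq_add_cos_sq θ
    have : |Real.sin (θ/2)| ^ 2 = Real.sin (θ/2) ^ 2 := sq_abs _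
    nlinarith [h2]
  rw [h3, Real.sqrt_sq (by positivity)]

/-- The normalized Fejér kernel of order `ℓ`:
`K_ℓ(x) = (1/ℓ²) |Σ_{j=0}^{ℓ-1} e^{2πijx}|²`. -/
noncomputable def fejer (ℓ : ℕ) (x : ℝ) : ℝ :=
  (1 / (ℓ : ℝ) ^ 2) *
    ‖(∑ j ∈ Finset.range ℓ,
      Complex.exp (2 * Real.pi * Complex.I * (j : ℂ) * (x : ℂ)))‖ ^ 2

lemma fejer_eq (ℓ : ℕ) (x : ℝ) (hs : Real.sin (π * x) ≠ 0) :
    fejer ℓ x = Real.sin (ℓ * π * x) ^ 2 / ((ℓ : ℝ) ^ 2 * Real.sin (π * x) ^ 2) := by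
  set z : ℂ := Complex.exp ((2 * π * x : ℝ) * Complex.I) with hz
  have hterm : ∀ j : ℕ, Complex.exp (2 * Real.pi * Complex.I * (j : ℂ) * (x : ℂ)) = z ^ j := by
    intro j
    rw [hz, ← Complex.exp_nat_mul]
    congr 1
    push_cast
    ring
  have habs1 : ‖z - 1‖ = 2 * |Real.sin (π * x)| := by
    have := abs_exp_I_sub_one (2 * π * x)
    rw [show (2 * π * x) / 2 = π * x by ring] at this
    simpa [hz] using this
  have hzne : z ≠ 1 := by
    intro h
    rw [h] at habs1
    simp at habs1
    exact hs habs1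
  have hsum : ∑ j ∈ Finset.range ℓ,
      Complex.exp (2 * Real.pi * Complex.I * (j : ℂ) * (x : ℂ)) = (z ^ ℓ - 1) / (z - 1) := by
    rw [Finset.sum_congr rfl fun j _ => hterm j]
    exact geom_sum_eq hzne ℓ
  have hzl : z ^ ℓ = Complex.exp ((2 * π * (ℓ * x) : ℝ) * Complex.I) := by
    rw [hz, ← Complex.exp_nat_mul]
    congr 1
    push_cast
    ring
  have habs2 : ‖z ^ ℓ - 1‖ = 2 * |Real.sin (ℓ * π * x)| := by
    rw [hzl]
    have := abs_exp_I_sub_one (2 * π * (ℓ * x))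
    rw [show (2 * π * (ℓ * x)) / 2 = ℓ * π * x by ring] at this
    simpa using this
  have hsne : |Real.sin (π * x)| ≠ 0 := abs_ne_zero.mpr hs
  unfold fejer
  rw [hsum, norm_div, habs1, habs2]
  rw [div_pow]
  rw [show (2 * |Real.sin (ℓ * π * x)|) ^ 2 = 4 * Real.sin (ℓ * π * x) ^ 2 by
    rw [mul_pow, sq_abs]; ring]
  rw [show (2 * |Real.sin (π * x)|) ^ 2 = 4 * Real.sin (π * x) ^ 2 by
    rw [mul_pow, sq_abs]; ring]
  have h4 : Real.sin (π * x) ^ 2 ≠ 0 := pow_ne_zero 2 hs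
  field_simp

lemma fejer_nonneg (ℓ : ℕ) (x : ℝ) : 0 ≤ fejer ℓ x := by
  unfold fejer
  positivity

lemma fejer_le_one (ℓ : ℕ) (hℓ : 0 < ℓ) (x : ℝ) : fejer ℓ x ≤ 1 := by
  have hA : ‖(∑ j ∈ Finset.range ℓ,
      Complex.exp (2 * Real.pi * Complex.I * (j : ℂ) * (x : ℂ)))‖ ≤ ℓ := by
    calc ‖(∑ j ∈ Finset.range ℓ,
        Complex.exp (2 * Real.pi * Complex.I * (j : ℂ) * (x : ℂ)))‖
        ≤ ∑ j ∈ Finset.range ℓ, ‖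
          (Complex.exp (2 * Real.pi * Complex.I * (j : ℂ) * (x : ℂ)))‖ := by
          exact norm_sum_le _ _
      _ = ∑ j ∈ Finset.range ℓ, 1 := by
          refine Finset.sum_congr rfl fun j _ => ?_
          rw [Complex.norm_exp]
          norm_num [Complex.mul_re, Complex.mul_im]
      _ = ℓ := by simp
  have h0 : (0:ℝ) < (ℓ:ℝ) := by exact_mod_cast hℓ
  unfold fejer
  rw [div_mul_eq_mul_div, one_mul, div_le_one (by positivity)]
  nlinarith [norm_nonneg (∑ j ∈ Finset.range ℓ,
      Complex.exp (2 * Real.pi * Complex.I * (j : ℂ) * (x : ℂ)))]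

lemma fejer_neg (ℓ : ℕ) (x : ℝ) : fejer ℓ (-x) = fejer ℓ x := by
  unfold fejer
  have h : ∀ j : ℕ, Complex.exp (2 * Real.pi * Complex.I * (j : ℂ) * ((-x : ℝ) : ℂ))
      = starRingEnd ℂ (Complex.exp (2 * Real.pi * Complex.I * (j : ℂ) * (x : ℂ))) := by
    intro j
    rw [← Complex.exp_conj]
    have hc : starRingEnd ℂ (2 * (Real.pi : ℂ) * Complex.I * (j : ℂ) * (x : ℂ))
        = -(2 * (Real.pi : ℂ) * Complex.I * (j : ℂ) * (x : ℂ)) := by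
      simp only [map_mul, Complex.conj_ofReal, Complex.conj_I, map_ofNat, map_natCast]
      ring
    rw [hc]
    push_cast
    ring_nf
  rw [Finset.sum_congr rfl fun j _ => h j, ← map_sum, Complex.norm_conj]

lemma fejer_zero (ℓ : ℕ) (hℓ : 0 < ℓ) : fejer ℓ 0 = 1 := by
  unfold fejer
  have h0 : (0:ℝ) < (ℓ:ℝ) := by exact_mod_cast hℓ
  simp
  field_simp

lemma poly1 (s : ℝ) (h0 : 0 ≤ s) (h1 : s ≤ 1) :
    (s - s^3/6 + s^4*(5/96))^2 ≤ (1 - s^2/29) * (s - s^3/64)^2 := by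
  have e5 : s^5 ≤ s^4 := pow_le_pow_of_le_one h0 h1 (by norm_num)
  have e6 : s^6 ≤ s^4 := pow_le_pow_of_le_one h0 h1 (by norm_num)
  have e8 : s^8 ≤ s^4 := pow_le_pow_of_le_one h0 h1 (by norm_num)
  have e7 : (0:ℝ) ≤ s^7 := by positivity
  have e4 : (0:ℝ) ≤ s^4 := by positivity
  nlinarith [e5, e6, e7, e8, e4]

lemma poly2 (s : ℝ) (h1 : 1 ≤ s) (h2 : s ≤ 21/20) :
    (8933/10000 : ℝ) ≤ (1 - s^2/29) * (s - s^3/64)^2 := by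
  have hs0 : (0:ℝ) ≤ s := by linarith
  have hq : s^2 ≤ 441/400 := by nlinarith
  have h3 : (25159/25600 : ℝ) ≤ s - s^3/64 := by nlinarith [mul_nonneg (sub_nonneg.mpr hq) hs0]
  have h4 : ((25159:ℝ)/25600)^2 ≤ (s - s^3/64)^2 := pow_le_pow_left₀ (by norm_num) h3 2
  have h5 : (11159/11600 : ℝ) ≤ 1 - s^2/29 := by linarith
  calc (8933/10000 : ℝ) ≤ (11159/11600) * ((25159:ℝ)/25600)^2 := by norm_num
  _ ≤ (1 - s^2/29) * (s - s^3/64)^2 := by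
      apply mul_le_mul h5 h4 (by positivity) (by linarith)

lemma poly3 (w : ℝ) (h1 : 441/400 ≤ w) (h2 : w ≤ 98697/10000) :
    1 ≤ (1 - w/29) * w * (1 - w/64)^2 := by
  have g1 : (0:ℝ) ≤ w - 441/400 := by linarith
  have g2 : (0:ℝ) ≤ 98697/10000 - w := by linarith
  nlinarith [mul_nonneg g1 g2, mul_nonneg (mul_nonneg (mul_nonneg g1 g1) g1) g2,
    mul_nonneg (mul_nonneg g1 g1) g1, mul_nonneg g1 g1]

set_option maxHeartbeats 8000000 in
lemma fejer_bounds (ℓ : ℕ) (hℓ : 4 ≤ ℓ) (x : ℝ) (hx0 : 0 < x) (hx : x ≤ 1 / ℓ) :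
    1 - 12 * (ℓ:ℝ)^2 * x^2 ≤ fejer ℓ x ∧ fejer ℓ x ≤ 1 - (ℓ:ℝ)^2 * x^2 / 3 := by
  have hL : (4:ℝ) ≤ (ℓ:ℝ) := by exact_mod_cast hℓ
  have hL0 : (0:ℝ) < (ℓ:ℝ) := by linarith
  have hπ1 : (3.141592 : ℝ) < π := Real.pi_gt_d6
  have hπ2 : π < 3.141593 := Real.pi_lt_d6
  have hπl : (9.8696 : ℝ) < π^2 := by nlinarith
  have hπu : π^2 < 9.8697 := by nlinarith
  set u : ℝ := π * x with hu_def
  set s : ℝ := (ℓ:ℝ) * π * x with hs_def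
  have hu0 : 0 < u := by positivity
  have hs0 : 0 < s := by positivity
  have hsu : s = (ℓ:ℝ) * u := by rw [hu_def, hs_def]; ring
  have hxl : (ℓ:ℝ) * x ≤ 1 := by
    rw [mul_comm]; exact (le_div_iff₀ hL0).mp hx
  have hsπ : s ≤ π := by
    rw [hs_def]; nlinarith
  have hs2 : s^2 < 10 := by nlinarith
  have hs3 : s^3 < 10 * s := by nlinarith
  have hu1 : u ≤ s / 4 := by rw [hsu]; nlinarith
  have hu2 : u^2 ≤ s^2/16 := by nlinarith
  have hu_lt1 : u < 1 := by nlinarith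
  have hsinu : 0 < Real.sin u := Real.sin_pos_of_pos_of_lt_pi hu0 (by nlinarith)
  have hKeq : fejer ℓ x = Real.sin s ^ 2 / ((ℓ:ℝ) * Real.sin u) ^ 2 := by
    rw [fejer_eq ℓ x (by rw [← hu_def]; exact ne_of_gt hsinu)]
    rw [← hu_def, ← hs_def]
    ring_nf
  set D : ℝ := (ℓ:ℝ) * Real.sin u with hD_def
  have hD0 : 0 < D := by positivity
  have hD_le : D ≤ s := by
    rw [hD_def, hsu]
    have := Real.sin_lt hu0
    nlinarith
  have hD_ge : s - s^3 / 64 ≤ D := by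
    have h1 : u - u^3/4 < Real.sin u := by
      have := Real.sin_gt_sub_cube hu0; nlinarith [pow_pos hu0 3]
    have h2 : (ℓ:ℝ) * (u - u^3/4) ≤ D := by
      rw [hD_def]; nlinarith
    have h3 : (ℓ:ℝ) * (u - u^3/4) = s - s * u^2 / 4 := by rw [hsu]; ring
    have h4 : s * u^2 / 4 ≤ s^3/64 := by nlinarith
    linarith
  have hDs_pos : 0 < s - s^3/64 := by linarith
  have hsins : 0 ≤ Real.sin s := Real.sin_nonneg_of_nonneg_of_le_pi hs0.le hsπ
  have hsx : s^2 = π^2 * ((ℓ:ℝ)^2 * x^2) := by rw [hs_def]; ring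
  have hlx0 : (0:ℝ) ≤ (ℓ:ℝ)^2 * x^2 := by positivity
  have hB : s^2 ≤ 9.8697 * ((ℓ:ℝ)^2 * x^2) := by
    have h9 : 0 ≤ (9.8697 - π^2) * ((ℓ:ℝ)^2 * x^2) := mul_nonneg (by linarith) hlx0
    nlinarith [hsx, h9]
  constructor
  · -- lower bound
    rcases le_or_gt 1 (12 * (ℓ:ℝ)^2 * x^2) with h | h
    · have := fejer_nonneg ℓ x
      linarith
    · have hs1 : s < 1 := by nlinarith
      have hsin_lb : s - s^3/4 < Real.sin s := by
          have := Real.sin_gt_sub_cube hs0; nlinarith [pow_pos hs0 3]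
      have hlb0 : 0 ≤ s - s^3/4 := by nlinarith
      have hnum : (s - s^3/4)^2 ≤ Real.sin s ^ 2 := pow_le_pow_left₀ hlb0 hsin_lb.le 2
      have hden : D^2 ≤ s^2 := pow_le_pow_left₀ hD0.le hD_le 2
      have hK : (s - s^3/4)^2 / s^2 ≤ fejer ℓ x := by
        rw [hKeq]
        exact div_le_div₀ (sq_nonneg _) hnum (by positivity) hden
      have hA : 1 - s^2/2 ≤ (1 - s^2/4)^2 := by nlinarith [sq_nonneg (s^2)]
      have h5 : 1 - 12 * (ℓ:ℝ)^2 * x^2 ≤ (s - s^3/4)^2 / s^2 := by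
        rw [show (s - s^3/4)^2 / s^2 = (1 - s^2/4)^2 by field_simp]
        linarith
      linarith
  · -- upper bound
    have key : Real.sin s ^ 2 ≤ (1 - s^2/29) * (s - s^3/64)^2 := by
      rcases le_or_gt s 1 with hc1 | hc1
      · have hb := Real.sin_bound (x := s) (by rw [abs_of_pos hs0]; exact hc1)
        rw [abs_of_pos hs0] at hb
        have hub : Real.sin s ≤ s - s^3/6 + s^4 * (5/96) := by
          have := abs_le.mp hb
          have h54 : s^5 ≤ s^4 := pow_le_pow_of_le_one hs0.le hc1 (by norm_num)
          nlinarith [this.2, h54, pow_nonneg hs0.le 4]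
        have hsq : Real.sin s ^ 2 ≤ (s - s^3/6 + s^4*(5/96))^2 := pow_le_pow_left₀ hsins hub 2
        exact le_trans hsq (poly1 s hs0.le hc1)
      · rcases le_or_gt s (21/20) with hc2 | hc2
        · have hcos : Real.sin s ≤ 1 - 2/π^2 * (s - π/2)^2 := by
            have := Real.cos_le_one_sub_mul_cos_sq (x := s - π/2)
              (by rw [abs_le]; constructor <;> linarith)
            rwa [Real.cos_sub_pi_div_two] at this
          have j1 : (0.5207 : ℝ) ≤ π/2 - s := by linarith
          have j2 : ((0.5207 : ℝ))^2 ≤ (π/2 - s)^2 := pow_le_pow_left₀ (by norm_num) j1 2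
          have j2' : ((0.5207 : ℝ))^2 ≤ (s - π/2)^2 := by
            rw [show (s - π/2)^2 = (π/2 - s)^2 by ring]; exact j2
          have jπ : (0.2026 : ℝ) ≤ 2/π^2 := by
            rw [le_div_iff₀ (by positivity : (0:ℝ) < π^2)]
            linarith [hπu]
          have j3 : (0.2026 : ℝ) * (s - π/2)^2 ≤ 2/π^2 * (s - π/2)^2 :=
            mul_le_mul_of_nonneg_right jπ (sq_nonneg _)
          have hsin_ub : Real.sin s ≤ 0.9451 := by linarith [hcos, j3, j2']
          have hsq : Real.sin s ^ 2 ≤ ((0.9451:ℝ))^2 := pow_le_pow_left₀ hsins hsin_ub 2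
          have hp2 := poly2 s hc1.le hc2
          linarith [hsq, hp2]
        · have h1 : Real.sin s ^ 2 ≤ 1 := Real.sin_sq_le_one s
          have hw1 : ((21:ℝ)/20)^2 ≤ s^2 := pow_le_pow_left₀ (by norm_num) hc2.le 2
          have hw2' : s^2 ≤ π^2 := pow_le_pow_left₀ hs0.le hsπ 2
          have hw2 : s^2 ≤ 98697/10000 := by linarith
          have h2 := poly3 (s^2) (by linarith [hw1]) hw2
          have h3 : (1 - s^2/29) * (s^2) * (1 - s^2/64)^2
              = (1 - s^2/29) * (s - s^3/64)^2 := by ring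
          rw [h3] at h2
          linarith
    have key2 : (1 - s^2/29) * (s - s^3/64)^2 ≤ (1 - s^2/(3*π^2)) * D^2 := by
      have ha : (1 - s^2/29) ≤ (1 - s^2/(3*π^2)) := by
        have h7 : s^2/(3*π^2) ≤ s^2/29 := by
          apply div_le_div_of_nonneg_left (sq_nonneg s) (by norm_num) (by linarith [hπl])
        linarith
      have hb2 : (s - s^3/64)^2 ≤ D^2 := pow_le_pow_left₀ hDs_pos.le hD_ge 2
      have hcc : (0:ℝ) ≤ 1 - s^2/29 := by linarith
      exact mul_le_mul ha hb2 (sq_nonneg _) (by linarith)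
    have hfin : fejer ℓ x ≤ 1 - s^2/(3*π^2) := by
      rw [hKeq, div_le_iff₀ (by positivity)]
      calc Real.sin s ^ 2 ≤ (1 - s^2/(3*π^2)) * D^2 := le_trans key key2
      _ = (1 - s^2/(3*π^2)) * ((ℓ:ℝ) * Real.sin u)^2 := by rw [hD_def]
    have hq : s^2/(3*π^2) = (ℓ:ℝ)^2 * x^2 / 3 := by
      rw [hsx]
      field_simp
    linarith

theorem stmt5 (ℓ r : ℕ) (hℓ : 4 ≤ ℓ) (hr : 1 ≤ r) (x : ℝ)
    (hx : |x| ≤ 1 / (ℓ : ℝ)) :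
    1 - 12 * (r : ℝ) * (ℓ : ℝ) ^ 2 * x ^ 2 ≤ (fejer ℓ x) ^ r ∧
      (fejer ℓ x) ^ r ≤ 1 - (ℓ : ℝ) ^ 2 * x ^ 2 / 3 := by
  have hℓ0 : 0 < ℓ := by omega
  have hpt : 1 - 12 * (ℓ:ℝ)^2 * x^2 ≤ fejer ℓ x ∧ fejer ℓ x ≤ 1 - (ℓ:ℝ)^2 * x^2 / 3 := by
    rcases lt_trichotomy x 0 with hneg | h0 | hpos
    · have hx' : -x ≤ 1 / (ℓ:ℝ) := by rw [abs_of_neg hneg] at hx; linarith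
      have := fejer_bounds ℓ hℓ (-x) (by linarith) hx'
      rw [fejer_neg] at this
      simpa [neg_sq] using this
    · subst h0
      rw [fejer_zero ℓ hℓ0]
      norm_num
    · exact fejer_bounds ℓ hℓ x hpos (by rwa [abs_of_pos hpos] at hx)
  obtain ⟨hlow, hupp⟩ := hpt
  have h0 : 0 ≤ fejer ℓ x := fejer_nonneg ℓ x
  have h1 : fejer ℓ x ≤ 1 := fejer_le_one ℓ hℓ0 x
  constructor
  · have hber : 1 + (r:ℝ) * (fejer ℓ x - 1) ≤ (1 + (fejer ℓ x - 1)) ^ r :=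
      one_add_mul_le_pow (by linarith) r
    rw [show (1:ℝ) + (fejer ℓ x - 1) = fejer ℓ x by ring] at hber
    have hr0 : (0:ℝ) ≤ (r:ℝ) := Nat.cast_nonneg r
    have hmul : (r:ℝ) * (1 - fejer ℓ x) ≤ (r:ℝ) * (12 * (ℓ:ℝ)^2 * x^2) :=
      mul_le_mul_of_nonneg_left (by linarith) hr0
    linarith [hber, hmul]
  · calc (fejer ℓ x) ^ r ≤ (fejer ℓ x) ^ 1 := pow_le_pow_of_le_one h0 h1 hr
    _ = fejer ℓ x := pow_one _
    _ ≤ 1 - (ℓ:ℝ)^2 * x^2 / 3 := hupp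
end

section
/- For every real x with 0 ≤ x < π, sin x ≤ x (1 − x²/10). -/
theorem stmt6 (x : ℝ) (hx0 : 0 ≤ x) (hxπ : x < Real.pi) :
    Real.sin x ≤ x * (1 - x ^ 2 / 10) := by
  rcases eq_or_lt_of_le hx0 with h0 | h0
  · simp [← h0]
  rcases le_or_gt x 2 with h2 | h2
  · -- use x = 2*(x/2), sin x = 2 sin(x/2) cos(x/2)
    set t := x / 2 with ht
    have ht0 : 0 < t := by positivity
    have ht1 : t ≤ 1 := by rw [ht]; linarith
    have habs : |t| ≤ 1 := by rw [abs_of_pos ht0]; exact ht1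
    have hsin : Real.sin x = 2 * Real.sin t * Real.cos t := by
      rw [ht, ← Real.sin_two_mul]; ring_nf
    have hcosb : Real.cos t ≤ 1 - t ^ 2 / 2 + |t| ^ 4 * (5 / 96) := by
      have := Real.cos_bound habs
      have := abs_le.1 this
      linarith [this.2]
    have hcos0 : 0 ≤ Real.cos t := Real.cos_nonneg_of_mem_Icc
      ⟨by linarith [Real.pi_pos], by linarith [Real.pi_gt_three]⟩
    have hsint : Real.sin t ≤ t := (Real.sin_lt ht0).le
    have hsin0 : 0 ≤ Real.sin t := Real.sin_nonneg_of_nonneg_of_le_pi ht0.le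
      (by linarith [Real.pi_gt_three])
    have h1 : Real.sin x ≤ 2 * t * Real.cos t := by
      rw [hsin]
      have : Real.sin t * Real.cos t ≤ t * Real.cos t :=
        mul_le_mul_of_nonneg_right hsint hcos0
      linarith
    have h2' : 2 * t * Real.cos t ≤ 2 * t * (1 - t ^ 2 / 2 + t ^ 4 * (5 / 96)) := by
      rw [abs_of_pos ht0] at hcosb
      exact mul_le_mul_of_nonneg_left hcosb (by positivity)
    have hx2 : x = 2 * t := by rw [ht]; ring
    rw [hx2] at h1
    rw [hx2]
    nlinarith [mul_nonneg (pow_nonneg ht0.le 3) (by nlinarith : (0:ℝ) ≤ 1 - t ^ 2), pow_nonneg ht0.le 3]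
  · -- x in (2, π): sin x = sin (π - x) < π - x
    have hπx : 0 < Real.pi - x := by linarith
    have h1 : Real.sin x ≤ Real.pi - x := by
      rw [← Real.sin_pi_sub]
      exact (Real.sin_lt hπx).le
    have hπ : Real.pi < 3.15 := by
      have := Real.pi_lt_d2
      linarith
    nlinarith [mul_nonneg (mul_nonneg (by linarith : (0:ℝ) ≤ x - 2) (by linarith : (0:ℝ) ≤ 3.15 - x)) (by linarith : (0:ℝ) ≤ x + 5.15)]
end

section
/- Let f_1, …, f_k ∈ [0,1) be distinct, set α_j = e^{2πi f_j}, let u_1, …, u_k ∈ ℂ be all nonzero, and let m ≥ k be an integer. Let V = V_m^k be the m × k Vandermonde matrix with entries α_j^ℓ (ℓ = 0, …, m−1), let D_u = diag(u_1, …, u_k) and D_α = diag(α_1, …, α_k), and set A = V D_u V^H and B = V D_u D_α V^H (V^H the conjugate transpose). Then the set { λ ∈ ℂ : there exists x ∈ ℂ^m with B x = λ A x and A x ≠ 0 } is exactly {α_1, …, α_k}. -/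
open Matrix

lemma alpha_inj (k : ℕ) (f : Fin k → ℝ) (hf : ∀ j, f j ∈ Set.Ico (0 : ℝ) 1)
    (hinj : Function.Injective f)
    (α : Fin k → ℂ) (hα : ∀ j, α j = Complex.exp (2 * Real.pi * Complex.I * (f j : ℂ))) :
    Function.Injective α := by
  intro a b hab
  apply hinj
  rw [hα a, hα b, Complex.exp_eq_exp_iff_exists_int] at hab
  obtain ⟨n, hn⟩ := hab
  have h2 : (2:ℂ) * Real.pi * Complex.I ≠ 0 := by
    simp [Real.pi_ne_zero, Complex.I_ne_zero]
  have heq : (2:ℂ) * Real.pi * Complex.I * (f a : ℂ)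
      = 2 * Real.pi * Complex.I * ((f b : ℂ) + n) := by rw [hn]; ring
  have hfa : (f a : ℂ) = (f b : ℂ) + n := mul_left_cancel₀ h2 heq
  have hr : f a = f b + n := by exact_mod_cast hfa
  have hn0 : (n : ℝ) = 0 := by
    have ha := hf a; have hb := hf b
    simp only [Set.mem_Ico] at ha hb
    have : (n:ℝ) = f a - f b := by linarith
    have h1 : (n:ℝ) < 1 := by rw [this]; linarith
    have h2' : (-1:ℝ) < n := by rw [this]; linarith
    have hn1 : n < 1 := by exact_mod_cast h1
    have hn2 : -1 < n := by exact_mod_cast h2'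
    have hz : n = 0 := by omega
    simp [hz]
  rw [hr, hn0, add_zero]

theorem stmt7 (k m : ℕ) (hkm : k ≤ m)
    (f : Fin k → ℝ) (hf : ∀ j, f j ∈ Set.Ico (0 : ℝ) 1)
    (hinj : Function.Injective f)
    (u : Fin k → ℂ) (hu : ∀ j, u j ≠ 0)
    (α : Fin k → ℂ) (hα : ∀ j, α j = Complex.exp (2 * Real.pi * Complex.I * (f j : ℂ)))
    (V : Matrix (Fin m) (Fin k) ℂ) (hV : ∀ ℓ j, V ℓ j = α j ^ (ℓ : ℕ)) :
    {lam : ℂ | ∃ x : Fin m → ℂ,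
        (V * Matrix.diagonal u * Matrix.diagonal α * Vᴴ).mulVec x =
          lam • (V * Matrix.diagonal u * Vᴴ).mulVec x ∧
        (V * Matrix.diagonal u * Vᴴ).mulVec x ≠ 0} = Set.range α := by
  have hαinj : Function.Injective α := alpha_inj k f hf hinj α hα
  -- V has trivial kernel
  have hVker : ∀ y : Fin k → ℂ, V *ᵥ y = 0 → y = 0 := by
    intro y hy
    apply Matrix.eq_zero_of_forall_pow_sum_mul_pow_eq_zero hαinj
    intro i
    have h := congrFun hy (Fin.castLE hkm i)
    simp only [Matrix.mulVec, dotProduct, Pi.zero_apply, hV, Fin.coe_castLE] at h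
    calc ∑ j, y j * α j ^ (i:ℕ) = ∑ j, α j ^ (i:ℕ) * y j :=
          Finset.sum_congr rfl fun j _ => mul_comm _ _
      _ = 0 := h
  ext lam
  simp only [Set.mem_setOf_eq, Set.mem_range]
  constructor
  · rintro ⟨x, hBx, hAne⟩
    simp only [← Matrix.mulVec_mulVec] at hBx hAne
    rw [← Matrix.mulVec_smul] at hBx
    have heq : Matrix.diagonal u *ᵥ Matrix.diagonal α *ᵥ Vᴴ *ᵥ x
        = lam • Matrix.diagonal u *ᵥ Vᴴ *ᵥ x := by
      have h0 : V *ᵥ (Matrix.diagonal u *ᵥ Matrix.diagonal α *ᵥ Vᴴ *ᵥ x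
          - lam • Matrix.diagonal u *ᵥ Vᴴ *ᵥ x) = 0 := by
        rw [Matrix.mulVec_sub, hBx, sub_self]
      exact sub_eq_zero.mp (hVker _ h0)
    have hDy : Matrix.diagonal u *ᵥ Vᴴ *ᵥ x ≠ 0 := by
      intro h
      exact hAne (by rw [h, Matrix.mulVec_zero])
    obtain ⟨j, hj⟩ := Function.ne_iff.mp hDy
    have hjy : u j * (Vᴴ *ᵥ x) j ≠ 0 := by
      simpa [Matrix.mulVec_diagonal] using hj
    have hpt := congrFun heq j
    simp only [Matrix.mulVec_diagonal, Pi.smul_apply, smul_eq_mul] at hpt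
    refine ⟨j, ?_⟩
    have hz : (α j - lam) * (u j * (Vᴴ *ᵥ x) j) = 0 := by
      linear_combination hpt
    rcases mul_eq_zero.mp hz with h | h
    · exact sub_eq_zero.mp h
    · exact absurd h hjy
  · rintro ⟨j0, rfl⟩
    set M : Matrix (Fin k) (Fin k) ℂ :=
      Matrix.vandermonde (fun j => star (α j)) with hM
    have hMdet : M.det ≠ 0 := by
      rw [hM, Matrix.det_vandermonde_ne_zero_iff]
      exact fun a b hab => hαinj (star_injective hab)
    set c : Fin k → ℂ := M⁻¹ *ᵥ Pi.single j0 1 with hc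
    set P : Matrix (Fin m) (Fin k) ℂ :=
      Matrix.of (fun ℓ i => if ℓ = Fin.castLE hkm i then (1:ℂ) else 0) with hP
    have hVHP : Vᴴ * P = M := by
      ext j i
      simp only [Matrix.mul_apply, hP, Matrix.of_apply, mul_ite, mul_one, mul_zero,
        Finset.sum_ite_eq', Finset.mem_univ, if_true]
      rw [Matrix.conjTranspose_apply, hV]
      simp [hM, Matrix.vandermonde, star_pow]
    have hVHx : Vᴴ *ᵥ P *ᵥ c = Pi.single j0 1 := by
      rw [Matrix.mulVec_mulVec, hVHP, hc, Matrix.mulVec_mulVec,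
        Matrix.mul_nonsing_inv _ (isUnit_iff_ne_zero.mpr hMdet), Matrix.one_mulVec]
    refine ⟨P *ᵥ c, ?_, ?_⟩
    · simp only [← Matrix.mulVec_mulVec]
      rw [hVHx, ← Matrix.mulVec_smul, ← Matrix.mulVec_smul]
      have hs : α j0 • (Pi.single j0 1 : Fin k → ℂ) = Pi.single j0 (α j0) := by
        ext j; by_cases h : j = j0 <;> simp [h, Pi.single_apply]
      rw [hs, Matrix.diagonal_mulVec_single, Matrix.diagonal_mulVec_single,
        Matrix.diagonal_mulVec_single, mul_one]
    · simp only [← Matrix.mulVec_mulVec]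
      rw [hVHx, Matrix.diagonal_mulVec_single, Matrix.mulVec_single]
      intro h0
      have hl0 : (0:ℕ) < m := lt_of_lt_of_le j0.pos hkm
      have h1 := congrFun h0 ⟨0, hl0⟩
      simp only [hV, Pi.zero_apply] at h1
      simp at h1
      rcases h1 with h1 | h1
      · simp [hV] at h1
      · exact hu j0 h1
end

section
/- Let ε ∈ (0,1) be such that ℓ := 4/ε is a positive integer, let r be a positive integer, set k := 2rℓ + 1, and let m be a positive integer. Then there exists u ∈ ℂ^k with Σ_{j=0}^{k−1} |u_j| = 1 such that for every integer t with |t| ≤ (1−ε)m/2, | Σ_{j=0}^{k−1} u_j e^{2πi j t / m} | ≤ 2^{−ε(k−1)/2}. -/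
open Polynomial Finset

lemma mul_coeff_nonneg {p q : ℝ[X]} (hp : ∀ n, 0 ≤ p.coeff n) (hq : ∀ n, 0 ≤ q.coeff n)
    (n : ℕ) : 0 ≤ (p * q).coeff n := by
  rw [Polynomial.coeff_mul]
  exact Finset.sum_nonneg fun x _ => mul_nonneg (hp _) (hq _)

lemma pow_coeff_nonneg {p : ℝ[X]} (hp : ∀ n, 0 ≤ p.coeff n) (r : ℕ) (n : ℕ) :
    0 ≤ (p ^ r).coeff n := by
  induction r generalizing n with
  | zero => simp [Polynomial.coeff_one]; split <;> norm_num
  | succ r ih => rw [pow_succ]; exact mul_coeff_nonneg ih hp n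

lemma geom_coeff_nonneg (ℓ n : ℕ) : 0 ≤ (∑ i ∈ Finset.range ℓ, (X : ℝ[X]) ^ i).coeff n := by
  rw [Polynomial.finset_sum_coeff]
  refine Finset.sum_nonneg fun i _ => ?_
  rw [Polynomial.coeff_X_pow]
  split <;> norm_num

theorem stmt8 (ε : ℝ) (hε0 : 0 < ε) (hε1 : ε < 1) (ℓ r k m : ℕ)
    (hℓ : 0 < ℓ) (hℓε : (ℓ : ℝ) = 4 / ε) (hr : 0 < r)
    (hk : k = 2 * r * ℓ + 1) (hm : 0 < m) :
    ∃ u : Fin k → ℂ, (∑ j, ‖u j‖) = 1 ∧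
      ∀ t : ℤ, (|t| : ℝ) ≤ (1 - ε) * (m : ℝ) / 2 →
        ‖(∑ j : Fin k,
            u j * Complex.exp (2 * Real.pi * Complex.I * ((j : ℕ) : ℂ) * (t : ℂ) / (m : ℂ)))‖
          ≤ (2 : ℝ) ^ (-(ε * ((k : ℝ) - 1) / 2)) := by
  have hεℓ : ε * (ℓ : ℝ) = 4 := by rw [hℓε]; field_simp
  set N := r * (ℓ - 1) with hN
  set g : ℝ[X] := ∑ i ∈ Finset.range ℓ, X ^ i with hg
  set q : ℝ[X] := g ^ r with hq
  have hgdeg : g.natDegree ≤ ℓ - 1 := by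
    refine Polynomial.natDegree_sum_le_of_forall_le _ _ fun i hi => ?_
    rw [Polynomial.natDegree_X_pow]
    exact Nat.le_sub_one_of_lt (Finset.mem_range.mp hi)
  have hqdeg : q.natDegree ≤ N := by
    rw [hq, Polynomial.natDegree_pow]
    exact Nat.mul_le_mul_left r hgdeg
  set Q : ℝ[X] := q * Polynomial.reflect N q with hQ
  have hrefdeg : (Polynomial.reflect N q).natDegree ≤ N := by
    rw [Polynomial.natDegree_le_iff_coeff_eq_zero]
    intro M hM
    rw [Polynomial.coeff_reflect, Polynomial.revAt_eq_self_of_lt hM]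
    exact Polynomial.coeff_eq_zero_of_natDegree_lt (lt_of_le_of_lt hqdeg hM)
  have hQdeg : Q.natDegree < k := by
    have h1 : Q.natDegree ≤ N + N := le_trans (Polynomial.natDegree_mul_le) (add_le_add hqdeg hrefdeg)
    have h2 : N ≤ r * ℓ := Nat.mul_le_mul_left r (Nat.sub_le ℓ 1)
    have h3 : 2 * r * ℓ = 2 * (r * ℓ) := by ring
    omega
  have hqpos : ∀ n, 0 ≤ q.coeff n := pow_coeff_nonneg (geom_coeff_nonneg ℓ) r
  have hQpos : ∀ n, 0 ≤ Q.coeff n := by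
    intro n
    exact mul_coeff_nonneg hqpos (fun j => by rw [Polynomial.coeff_reflect]; exact hqpos _) n
  have hqev1 : q.eval 1 = (ℓ : ℝ) ^ r := by
    simp [hq, hg, Polynomial.eval_pow, Polynomial.eval_finset_sum]
  have hrefev1 : (Polynomial.reflect N q).eval 1 = (ℓ : ℝ) ^ r := by
    haveI : Invertible (1 : ℝ) := invertibleOne
    have h := Polynomial.eval₂_reflect_mul_pow (RingHom.id ℝ) 1 N q hqdeg
    simp only [invOf_one, one_pow, mul_one] at h
    have h1 : Polynomial.eval₂ (RingHom.id ℝ) 1 (Polynomial.reflect N q)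
        = (Polynomial.reflect N q).eval 1 := rfl
    have h2 : Polynomial.eval₂ (RingHom.id ℝ) 1 q = q.eval 1 := rfl
    rw [h1, h2] at h
    rw [h, hqev1]
  set L : ℝ := (ℓ : ℝ) ^ (2 * r) with hL
  have hLpos : 0 < L := by positivity
  have hQev1 : Q.eval 1 = L := by
    rw [hQ, Polynomial.eval_mul, hqev1, hrefev1, hL, ← pow_add, two_mul]
  have hsumQ : ∑ n ∈ Finset.range k, Q.coeff n = L := by
    have h := Polynomial.eval_eq_sum_range' hQdeg (1 : ℝ)
    simp only [one_pow, mul_one] at h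
    rw [← h, hQev1]
  refine ⟨fun n => (-1) ^ (n : ℕ) * ((Q.coeff n : ℝ) : ℂ) / (L : ℂ), ?_, ?_⟩
  · have habs : ∀ n : Fin k,
        ‖(-1) ^ (n : ℕ) * ((Q.coeff n : ℝ) : ℂ) / (L : ℂ)‖ = Q.coeff n / L := by
      intro n
      rw [norm_div, norm_mul, norm_pow]
      simp [abs_of_nonneg (hQpos n), abs_of_nonneg hLpos.le]
    rw [Fintype.sum_congr _ _ habs]
    rw [Fin.sum_univ_eq_sum_range (fun n => Q.coeff n / L) k, ← Finset.sum_div, hsumQ,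
      div_self hLpos.ne']
  · intro t ht
    have hε1' : 0 < 1 - ε := by linarith
    have hm0 : (0:ℝ) < (m:ℝ) := by exact_mod_cast hm
    -- RHS simplification
    have hRHS : (2 : ℝ) ^ (-(ε * ((k : ℝ) - 1) / 2)) = ((16 : ℝ) ^ r)⁻¹ := by
      have hk1 : (k : ℝ) - 1 = 2 * (r:ℝ) * (ℓ:ℝ) := by rw [hk]; push_cast; ring
      have he : -(ε * ((k : ℝ) - 1) / 2) = -(((4 * r : ℕ) : ℝ)) := by
        rw [hk1]; push_cast; linear_combination (-(r:ℝ)) * hεℓ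
      rw [he, Real.rpow_neg (by norm_num : (0:ℝ) ≤ 2), Real.rpow_natCast]
      norm_num [pow_mul]
    rw [hRHS]
    -- set up the point on the circle
    set θ : ℝ := 2 * Real.pi * t / m with hθ
    have htabs : |(t:ℝ)| ≤ (1 - ε) * (m:ℝ) / 2 := ht
    have hθabs : |θ| ≤ (1 - ε) * Real.pi := by
      have h1 : |θ| = 2 * Real.pi * |(t:ℝ)| / m := by
        rw [hθ, abs_div, abs_mul, abs_mul, abs_of_pos hm0,
          abs_of_pos Real.pi_pos, abs_of_pos (by norm_num : (0:ℝ) < 2)]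
      rw [h1]
      have h2 : 2 * Real.pi * |(t:ℝ)| / m ≤ 2 * Real.pi * ((1 - ε) * (m:ℝ) / 2) / m := by
        gcongr
      refine le_trans h2 (le_of_eq ?_)
      field_simp
    have hθ2 : |θ / 2| ≤ Real.pi / 2 := by
      rw [abs_div, abs_of_pos (by norm_num : (0:ℝ) < 2)]
      have hπ := Real.pi_pos
      have hεπ := mul_pos hε0 hπ
      have : (1 - ε) * Real.pi ≤ Real.pi := by linarith
      linarith
    set z : ℂ := Complex.exp ((θ : ℂ) * Complex.I) with hz
    set w : ℂ := -z with hw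
    have hzabs : ‖z‖ = 1 := Complex.norm_exp_ofReal_mul_I θ
    have hwabs : ‖w‖ = 1 := by rw [hw, norm_neg]; exact hzabs
    have hw0 : w ≠ 0 := by
      intro h; rw [h] at hwabs; simp at hwabs
    have hwinvabs : ‖w⁻¹‖ = 1 := by rw [norm_inv, hwabs]; norm_num
    -- |w - 1| ≥ 2ε
    have hcosnn : 0 ≤ Real.cos (θ / 2) := by
      have h := abs_le.mp hθ2
      exact Real.cos_nonneg_of_mem_Icc ⟨by linarith [h.1], h.2⟩
    have habs1 : ‖w - 1‖ = 2 * Real.cos (θ / 2) := by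
      have h1 : w - 1 = -(z + 1) := by rw [hw]; ring
      rw [h1, norm_neg]
      have hre : (z + 1).re = Real.cos θ + 1 := by
        simp [hz, Complex.exp_ofReal_mul_I_re]
      have him : (z + 1).im = Real.sin θ := by
        simp [hz, Complex.exp_ofReal_mul_I_im]
      rw [Complex.norm_def, Complex.normSq_apply, hre, him]
      have hsq : (Real.cos θ + 1) * (Real.cos θ + 1) + Real.sin θ * Real.sin θ
          = (2 * Real.cos (θ / 2)) ^ 2 := by
        have hc := Real.cos_sq (θ / 2)
        have hs := Real.sin_sq_add_cos_sq θ
        have h2 : 2 * (θ / 2) = θ := by ring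
        rw [h2] at hc
        linear_combination hs - 4 * hc
      rw [hsq, Real.sqrt_sq (by positivity)]
    have hcoslb : ε ≤ Real.cos (θ / 2) := by
      have h1 : Real.cos ((1 - ε) * Real.pi / 2) ≤ Real.cos |θ / 2| := by
        apply Real.cos_le_cos_of_nonneg_of_le_pi (abs_nonneg _)
        · have hπ := Real.pi_pos
          have hεπ := mul_pos hε0 hπ
          linarith
        · rw [abs_div, abs_of_pos (by norm_num : (0:ℝ) < 2)]
          have := hθabs; linarith
      rw [Real.cos_abs] at h1
      have h2 : (1 - ε) * Real.pi / 2 = Real.pi / 2 - ε * Real.pi / 2 := by ring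
      rw [h2, Real.cos_pi_div_two_sub] at h1
      have h3 : 2 / Real.pi * (ε * Real.pi / 2) ≤ Real.sin (ε * Real.pi / 2) := by
        apply Real.mul_le_sin
        · positivity
        · have hπ := Real.pi_pos
          have hεπ := mul_pos (mul_pos hε1' hπ) (by norm_num : (0:ℝ) < 1/2)
          nlinarith
      have h4 : 2 / Real.pi * (ε * Real.pi / 2) = ε := by
        field_simp
      linarith
    have habs2 : 2 * ε ≤ ‖w - 1‖ := by rw [habs1]; linarith
    have habs3 : 2 * ε ≤ ‖w⁻¹ - 1‖ := by
      have h1 : w⁻¹ - 1 = w⁻¹ * (1 - w) := by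
        field_simp
      rw [h1, norm_mul, hwinvabs, one_mul, norm_sub_rev]
      exact habs2
    -- the key bound on evaluations of qc
    set qc : ℂ[X] := q.map (algebraMap ℝ ℂ) with hqc
    have hqcdeg : qc.natDegree ≤ N := le_trans Polynomial.natDegree_map_le hqdeg
    have hbound : ∀ v : ℂ, ‖v‖ = 1 → 2 * ε ≤ ‖v - 1‖ →
        ‖Polynomial.eval v qc‖ ≤ ((ℓ : ℝ) / 4) ^ r := by
      intro v hv1 hv2
      have hvne : v ≠ 1 := by
        intro h
        rw [h] at hv2
        simp at hv2
        linarith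
      have heval : Polynomial.eval v qc = (∑ i ∈ Finset.range ℓ, v ^ i) ^ r := by
        simp [hqc, hq, hg, Polynomial.map_pow, Polynomial.map_sum]
      rw [heval, geom_sum_eq hvne, norm_pow, norm_div]
      have hnum : ‖v ^ ℓ - 1‖ ≤ 2 := by
        calc ‖v ^ ℓ - 1‖ ≤ ‖v ^ ℓ - 0‖ + ‖(0:ℂ) - 1‖ :=
              norm_sub_le_norm_sub_add_norm_sub _ 0 _
          _ = 2 := by rw [sub_zero, zero_sub, norm_pow, hv1, norm_neg]; norm_num
      have hden : 0 < 2 * ε := by linarith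
      have hstep : ‖v ^ ℓ - 1‖ / ‖v - 1‖ ≤ 2 / (2 * ε) :=
        div_le_div₀ (by norm_num) hnum hden hv2
      have heq : 2 / (2 * ε) = (ℓ : ℝ) / 4 := by
        rw [hℓε]; field_simp
      rw [heq] at hstep
      exact pow_le_pow_left₀ (by positivity) hstep r
    -- rewrite the sum as an evaluation
    have hsummand : ∀ n : Fin k,
        ((-1) ^ (n : ℕ) * ((Q.coeff n : ℝ) : ℂ) / (L : ℂ)) *
            Complex.exp (2 * Real.pi * Complex.I * ((n : ℕ) : ℂ) * (t : ℂ) / (m : ℂ))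
          = ((Q.coeff n : ℝ) : ℂ) * w ^ (n : ℕ) / (L : ℂ) := by
      intro n
      have hm0' : (m : ℂ) ≠ 0 := Nat.cast_ne_zero.mpr hm.ne'
      have hexp : Complex.exp (2 * Real.pi * Complex.I * ((n : ℕ) : ℂ) * (t : ℂ) / (m : ℂ))
          = z ^ (n : ℕ) := by
        rw [hz, ← Complex.exp_nat_mul]
        congr 1
        push_cast [hθ]
        field_simp
      rw [hexp, hw, neg_pow]
      ring
    have hQcdeg : (Q.map (algebraMap ℝ ℂ)).natDegree < k :=
      lt_of_le_of_lt Polynomial.natDegree_map_le hQdeg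
    have hev : ∑ n ∈ Finset.range k, ((Q.coeff n : ℝ) : ℂ) * w ^ n
        = Polynomial.eval w (Q.map (algebraMap ℝ ℂ)) := by
      rw [Polynomial.eval_eq_sum_range' hQcdeg]
      refine Finset.sum_congr rfl fun n _ => ?_
      rw [Polynomial.coeff_map]
      norm_num
    have hS : (∑ j : Fin k, ((-1) ^ (j : ℕ) * ((Q.coeff j : ℝ) : ℂ) / (L : ℂ)) *
            Complex.exp (2 * Real.pi * Complex.I * ((j : ℕ) : ℂ) * (t : ℂ) / (m : ℂ)))
        = Polynomial.eval w (Q.map (algebraMap ℝ ℂ)) / (L : ℂ) := by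
      rw [Finset.sum_congr rfl fun n _ => hsummand n]
      rw [Fin.sum_univ_eq_sum_range (fun n => ((Q.coeff n : ℝ) : ℂ) * w ^ n / (L : ℂ)) k]
      rw [← Finset.sum_div, hev]
    rw [hS]
    -- factor the evaluation
    have hQc : Q.map (algebraMap ℝ ℂ) = qc * Polynomial.reflect N qc := by
      rw [hQ, Polynomial.map_mul, hqc, Polynomial.reflect_map]
    have hrefl : Polynomial.eval w (Polynomial.reflect N qc)
        = Polynomial.eval w⁻¹ qc * w ^ N := by
      haveI : Invertible (w⁻¹) := invertibleOfNonzero (inv_ne_zero hw0)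
      have h := Polynomial.eval₂_reflect_mul_pow (RingHom.id ℂ) w⁻¹ N qc hqcdeg
      have hinv : (⅟(w⁻¹) : ℂ) = w := by rw [invOf_eq_inv, inv_inv]
      rw [hinv] at h
      have h1 : Polynomial.eval₂ (RingHom.id ℂ) w (Polynomial.reflect N qc)
          = Polynomial.eval w (Polynomial.reflect N qc) := rfl
      have h2 : Polynomial.eval₂ (RingHom.id ℂ) w⁻¹ qc = Polynomial.eval w⁻¹ qc := rfl
      rw [h1, h2] at h
      have hwN : (w⁻¹) ^ N * w ^ N = 1 := by
        rw [← mul_pow, inv_mul_cancel₀ hw0, one_pow]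
      calc Polynomial.eval w (Polynomial.reflect N qc)
          = Polynomial.eval w (Polynomial.reflect N qc) * ((w⁻¹) ^ N * w ^ N) := by
            rw [hwN, mul_one]
        _ = Polynomial.eval w (Polynomial.reflect N qc) * (w⁻¹) ^ N * w ^ N := by ring
        _ = Polynomial.eval w⁻¹ qc * w ^ N := by rw [h]
    rw [norm_div, hQc, Polynomial.eval_mul, norm_mul, hrefl, norm_mul, norm_pow, hwabs,
      one_pow, mul_one, Complex.norm_real, Real.norm_eq_abs, abs_of_pos hLpos]
    have hfin : ((ℓ : ℝ) / 4) ^ r * ((ℓ : ℝ) / 4) ^ r / L = ((16 : ℝ) ^ r)⁻¹ := by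
      have hl0 : (0:ℝ) < (ℓ:ℝ) := by exact_mod_cast hℓ
      rw [hL, div_pow]
      have h16 : (16 : ℝ) ^ r = 4 ^ r * 4 ^ r := by rw [← mul_pow]; norm_num
      have hll : (ℓ : ℝ) ^ (2 * r) = (ℓ : ℝ) ^ r * (ℓ : ℝ) ^ r := by rw [two_mul, pow_add]
      rw [h16, hll]
      field_simp
    show ‖Polynomial.eval w qc‖ * ‖Polynomial.eval w⁻¹ qc‖ / L
        ≤ ((16 : ℝ) ^ r)⁻¹
    refine le_trans ?_ (le_of_eq hfin)
    have hb1 := hbound w hwabs habs2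
    have hb2 := hbound w⁻¹ hwinvabs habs3
    have hmul : ‖Polynomial.eval w qc‖ * ‖Polynomial.eval w⁻¹ qc‖
        ≤ ((ℓ : ℝ) / 4) ^ r * ((ℓ : ℝ) / 4) ^ r :=
      mul_le_mul hb1 hb2 (norm_nonneg _) (by positivity)
    exact div_le_div_of_nonneg_right hmul hLpos.le
end

section
/- Let ε ∈ (0,1) be such that 4/ε is a positive integer, let r be a positive integer, set k := 2r(4/ε) + 1, let m be an even positive integer with m ≥ 2k, and set Δ = 2/m. Then there exist two disjoint nonempty finite sets S, S' ⊂ [0,1), each of cardinality at most k and each Δ-separated (d_w(f, g) ≥ Δ for all distinct f, g in the same set), together with coefficients a : S → ℂ and b : S' → ℂ with Σ_{f∈S} |a_f| + Σ_{g∈S'} |b_g| = 1, such that for every integer t with |t| ≤ (1−ε)/Δ, | Σ_{f∈S} a_f e^{2πi f t} − Σ_{g∈S'} b_g e^{2πi g t} | ≤ 2^{−ε(k−1)/2}. -/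
/-- The wrap-around metric on `[0,1)`: `dw f g = min_{t ∈ ℤ} |f - g + t|`. -/
noncomputable def dw (f g : ℝ) : ℝ := ⨅ t : ℤ, |f - g + (t : ℝ)|

namespace Stmt10Aux

open Polynomial Finset

lemma natDegree_T_le : ∀ p : ℕ, (Chebyshev.T ℂ (p : ℤ)).natDegree ≤ p := by
  have key : ∀ p : ℕ, (Chebyshev.T ℂ (p : ℤ)).natDegree ≤ p ∧
      (Chebyshev.T ℂ ((p+1 : ℕ) : ℤ)).natDegree ≤ p + 1 := by
    intro p
    induction p with
    | zero => simp [Chebyshev.T_zero, Chebyshev.T_one]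
    | succ n ih =>
      refine ⟨ih.2, ?_⟩
      have h2 : ((n + 2 : ℕ) : ℤ) = ((n : ℤ) + 2) := by push_cast; ring
      rw [h2, Chebyshev.T_add_two]
      refine le_trans (natDegree_sub_le _ _) ?_
      rw [max_le_iff]
      constructor
      · calc (2 * X * Chebyshev.T ℂ ((n : ℤ) + 1)).natDegree
            ≤ (2 * X : ℂ[X]).natDegree + (Chebyshev.T ℂ ((n : ℤ) + 1)).natDegree :=
              natDegree_mul_le
          _ ≤ 1 + (n + 1) := by
              refine add_le_add ?_ ?_
              · compute_degree
              · have := ih.2; push_cast at this ⊢; exact this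
          _ = n + 2 := by ring
      · exact le_trans ih.1 (by omega)
  exact fun p => (key p).1

/-- The base polynomial: `B p c = z^p T_p((z^2 - (1+c)z + 1)/((1-c)z))`. -/
noncomputable def B (p : ℕ) (c : ℂ) : ℂ[X] :=
  ∑ i ∈ Finset.range (p + 1),
    C ((Chebyshev.T ℂ (p : ℤ)).coeff i / (1 - c) ^ i) *
      (X ^ 2 - C (1 + c) * X + 1) ^ i * X ^ (p - i)

lemma natDegree_B_le (p : ℕ) (c : ℂ) : (B p c).natDegree ≤ 2 * p := by
  refine natDegree_sum_le_of_forall_le _ _ fun i hi => ?_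
  rw [Finset.mem_range, Nat.lt_succ_iff] at hi
  calc (C ((Chebyshev.T ℂ (p : ℤ)).coeff i / (1 - c) ^ i) *
        (X ^ 2 - C (1 + c) * X + 1) ^ i * X ^ (p - i)).natDegree
      ≤ (C ((Chebyshev.T ℂ (p : ℤ)).coeff i / (1 - c) ^ i) *
        (X ^ 2 - C (1 + c) * X + 1) ^ i).natDegree + (X ^ (p - i) : ℂ[X]).natDegree :=
        natDegree_mul_le
    _ ≤ ((C ((Chebyshev.T ℂ (p : ℤ)).coeff i / (1 - c) ^ i) : ℂ[X]).natDegree +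
        ((X ^ 2 - C (1 + c) * X + 1 : ℂ[X]) ^ i).natDegree) + (p - i) := by
        refine add_le_add natDegree_mul_le ?_
        exact natDegree_X_pow_le _
    _ ≤ (0 + i * 2) + (p - i) := by
        refine add_le_add (add_le_add ?_ ?_) le_rfl
        · simp
        · refine le_trans natDegree_pow_le ?_
          have : (X ^ 2 - C (1 + c) * X + 1 : ℂ[X]).natDegree ≤ 2 := by compute_degree
          exact Nat.mul_le_mul_left _ this
    _ ≤ 2 * p := by omega

lemma eval_B (p : ℕ) (c : ℂ) (hc : (1 : ℂ) - c ≠ 0) (z : ℂ) (hz : z ≠ 0) :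
    (B p c).eval z
      = z ^ p * (Chebyshev.T ℂ (p : ℤ)).eval ((z ^ 2 - (1 + c) * z + 1) / ((1 - c) * z)) := by
  rw [B, eval_finset_sum,
    Polynomial.eval_eq_sum_range' (Nat.lt_succ_of_le (natDegree_T_le p)), Finset.mul_sum]
  refine Finset.sum_congr rfl fun i hi => ?_
  rw [Finset.mem_range, Nat.lt_succ_iff] at hi
  simp only [eval_mul, eval_pow, eval_C, eval_X, eval_add, eval_sub, eval_one]
  rw [div_pow, mul_pow]
  have hzi : z ^ i ≠ 0 := pow_ne_zero _ hz
  have hci : ((1 : ℂ) - c) ^ i ≠ 0 := pow_ne_zero _ hc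
  have hzp : z ^ (p - i) * z ^ i = z ^ p := by rw [← pow_add, Nat.sub_add_cancel hi]
  field_simp
  linear_combination ((Chebyshev.T ℂ (p : ℤ)).coeff i * (1 + (-z - z * c) + z ^ 2) ^ i) * hzp

lemma one_sub_cos_pos (ε : ℝ) (hε0 : 0 < ε) (hε1 : ε < 1) :
    0 < 1 - Real.cos (Real.pi * (1 - ε)) := by
  have hπ := Real.pi_pos
  have hc : Real.cos (Real.pi * (1 - ε)) = -Real.cos (Real.pi * ε) := by
    rw [show Real.pi * (1 - ε) = Real.pi - Real.pi * ε by ring, Real.cos_pi_sub]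
  have h2 : Real.cos (Real.pi * ε) = 2 * Real.cos (Real.pi * ε / 2) ^ 2 - 1 := by
    have h := Real.cos_two_mul (Real.pi * ε / 2)
    rw [show 2 * (Real.pi * ε / 2) = Real.pi * ε by ring] at h
    exact h
  have hcb : 0 < Real.cos (Real.pi * ε / 2) := by
    apply Real.cos_pos_of_mem_Ioo
    constructor <;> nlinarith
  nlinarith

lemma abs_eval_B_le (p : ℕ) (ε : ℝ) (hε0 : 0 < ε) (hε1 : ε < 1) (θ : ℝ)
    (hθ : |θ| ≤ Real.pi * (1 - ε)) :
    ‖(B p ((Real.cos (Real.pi * (1 - ε)) : ℝ) : ℂ)).eval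
      (Complex.exp (θ * Complex.I))‖ ≤ 1 := by
  set c := Real.cos (Real.pi * (1 - ε)) with hcdef
  have hπ := Real.pi_pos
  have h1c : 0 < 1 - c := one_sub_cos_pos ε hε0 hε1
  have hcC : (1 : ℂ) - (c : ℂ) ≠ 0 := by
    rw [show (1 : ℂ) - (c : ℂ) = ((1 - c : ℝ) : ℂ) by push_cast; ring]
    exact_mod_cast h1c.ne'
  set z := Complex.exp (θ * Complex.I) with hzdef
  have hz : z ≠ 0 := Complex.exp_ne_zero _
  rw [eval_B p _ hcC z hz, norm_mul, norm_pow, hzdef, Complex.norm_exp_ofReal_mul_I,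
    one_pow, one_mul]
  have h2cos : z ^ 2 + 1 = z * (2 * Complex.cos (θ : ℂ)) := by
    have h1 : z * Complex.exp (-(θ : ℂ) * Complex.I) = 1 := by
      rw [hzdef, ← Complex.exp_add]; norm_num
    calc z ^ 2 + 1 = z * Complex.exp ((θ : ℂ) * Complex.I)
          + z * Complex.exp (-(θ : ℂ) * Complex.I) := by rw [h1, hzdef]; ring
      _ = z * (2 * Complex.cos (θ : ℂ)) := by rw [Complex.two_cos]; ring
  set x : ℝ := (2 * Real.cos θ - (1 + c)) / (1 - c) with hxdef
  have hu : (z ^ 2 - (1 + (c : ℂ)) * z + 1) / ((1 - (c : ℂ)) * z) = ((x : ℝ) : ℂ) := by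
    rw [hxdef]
    push_cast
    rw [div_eq_div_iff (mul_ne_zero hcC hz) hcC]
    linear_combination (1 - (c : ℂ)) * h2cos
  have hcθ : c ≤ Real.cos θ := by
    rw [← Real.cos_abs]
    exact Real.cos_le_cos_of_nonneg_of_le_pi (abs_nonneg θ) (by nlinarith) hθ
  have hx1 : -1 ≤ x := by rw [hxdef, le_div_iff₀ h1c]; nlinarith
  have hx2 : x ≤ 1 := by
    rw [hxdef, div_le_one h1c]
    have := Real.cos_le_one θ; nlinarith
  have hφ : ((x : ℝ) : ℂ) = Complex.cos ((Real.arccos x : ℝ) : ℂ) := by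
    rw [← Complex.ofReal_cos, Real.cos_arccos hx1 hx2]
  rw [hu, hφ, Polynomial.Chebyshev.T_complex_cos]
  rw [show (((p : ℤ) : ℂ)) * ((Real.arccos x : ℝ) : ℂ) = ((p * Real.arccos x : ℝ) : ℂ) by
    push_cast; ring]
  rw [← Complex.ofReal_cos, Complex.norm_real, Real.norm_eq_abs]
  exact Real.abs_cos_le_one _

set_option maxHeartbeats 1000000 in
lemma eval_B_neg_one (ℓ : ℕ) (hℓ : 0 < ℓ) (ε : ℝ) (hε0 : 0 < ε) (hε1 : ε < 1)
    (hεℓ : ε * (ℓ : ℝ) = 4) :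
    ∃ M : ℝ, 32 ≤ M ∧
      (B (2 * ℓ) ((Real.cos (Real.pi * (1 - ε)) : ℝ) : ℂ)).eval (-1) = (M : ℂ) := by
  set c := Real.cos (Real.pi * (1 - ε)) with hcdef
  have hπ := Real.pi_pos
  have hπ3 := Real.pi_gt_three
  have h1c : 0 < 1 - c := one_sub_cos_pos ε hε0 hε1
  have hcC : (1 : ℂ) - (c : ℂ) ≠ 0 := by
    rw [show (1 : ℂ) - (c : ℂ) = ((1 - c : ℝ) : ℂ) by push_cast; ring]
    exact_mod_cast h1c.ne'
  set sb := Real.sin (Real.pi * ε / 2) with hsbdef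
  set cb := Real.cos (Real.pi * ε / 2) with hcbdef
  have hsc : sb ^ 2 + cb ^ 2 = 1 := Real.sin_sq_add_cos_sq _
  have hcb : 0 < cb := by
    rw [hcbdef]; apply Real.cos_pos_of_mem_Ioo; constructor <;> nlinarith
  have hsb : 0 < sb := by
    rw [hsbdef]; apply Real.sin_pos_of_pos_of_lt_pi <;> nlinarith
  have hcpe : Real.cos (Real.pi * ε) = 2 * cb ^ 2 - 1 := by
    have h := Real.cos_two_mul (Real.pi * ε / 2)
    rw [show 2 * (Real.pi * ε / 2) = Real.pi * ε by ring] at h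
    rw [h, hcbdef]
  have hc : c = 1 - 2 * cb ^ 2 := by
    rw [hcdef, show Real.pi * (1 - ε) = Real.pi - Real.pi * ε by ring, Real.cos_pi_sub, hcpe]
    ring
  set y : ℝ := (3 + c) / (1 - c) with hydef
  have hy : y = (2 + 2 * sb ^ 2) / (2 * cb ^ 2) := by
    rw [hydef, hc]; congr 1 <;> nlinarith
  have hcb2 : (0 : ℝ) < 2 * cb ^ 2 := by positivity
  have hy1 : 1 ≤ y := by rw [hy, le_div_iff₀ hcb2]; nlinarith
  have htan : Real.pi * ε / 2 ≤ sb / cb := by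
    have h := Real.le_tan (x := Real.pi * ε / 2) (by positivity) (by nlinarith)
    rw [Real.tan_eq_sin_div_cos] at h
    rw [hsbdef, hcbdef]; exact h
  have htb' : Real.pi * ε * cb ≤ 2 * sb := by
    rw [div_le_div_iff₀ (by norm_num : (0:ℝ) < 2) hcb] at htan; linarith
  have h4 : (Real.pi * ε * cb) ^ 2 ≤ (2 * sb) ^ 2 :=
    pow_le_pow_left₀ (mul_nonneg (by positivity) hcb.le) htb' 2
  have h5 := mul_le_mul_of_nonneg_right h4 (sq_nonneg cb)
  have hy2 : (Real.pi * ε) ^ 2 ≤ y ^ 2 - 1 := by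
    rw [hy, div_pow, le_sub_iff_add_le, le_div_iff₀ (by positivity : (0:ℝ) < (2*cb^2)^2)]
    have hcb2' : cb ^ 2 = 1 - sb ^ 2 := by linarith
    have hc4 : cb ^ 4 = (1 - sb ^ 2) ^ 2 := by rw [show cb ^ 4 = (cb ^ 2) ^ 2 by ring, hcb2']
    calc ((Real.pi * ε) ^ 2 + 1) * (2 * cb ^ 2) ^ 2
        = 4 * ((Real.pi * ε * cb) ^ 2 * cb ^ 2) + 4 * cb ^ 4 := by ring
      _ ≤ 4 * ((2 * sb) ^ 2 * cb ^ 2) + 4 * cb ^ 4 := by linarith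
      _ = 16 * sb ^ 2 * cb ^ 2 + 4 * cb ^ 4 := by ring
      _ = 16 * sb ^ 2 * (1 - sb ^ 2) + 4 * (1 - sb ^ 2) ^ 2 := by rw [hcb2', hc4]
      _ = 4 + 8 * sb ^ 2 - 12 * sb ^ 4 := by ring
      _ ≤ 4 + 8 * sb ^ 2 + 4 * sb ^ 4 := by nlinarith [sq_nonneg (sb ^ 2)]
      _ = (2 + 2 * sb ^ 2) ^ 2 := by ring
  have hynn : (0:ℝ) ≤ y ^ 2 - 1 := le_trans (sq_nonneg _) hy2
  set sq2 := Real.sqrt (y ^ 2 - 1) with hsqdef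
  have hsq : Real.pi * ε ≤ sq2 := by
    rw [hsqdef, show Real.pi * ε = Real.sqrt ((Real.pi * ε) ^ 2) from
      (Real.sqrt_sq (by positivity)).symm]
    exact Real.sqrt_le_sqrt hy2
  set E := y + sq2 with hEdef
  have hE : 1 + Real.pi * ε ≤ E := by
    have : 0 ≤ sq2 := Real.sqrt_nonneg _
    rw [hEdef]; linarith
  have hE0 : 0 < E := by nlinarith
  set s := Real.log E with hsdef2
  have hexps : Real.exp s = E := Real.exp_log hE0
  have hsq2 : sq2 ^ 2 = y ^ 2 - 1 := Real.sq_sqrt hynn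
  have hsinv : Real.exp (-s) = y - sq2 := by
    rw [Real.exp_neg, hexps]
    have hmul : E * (y - sq2) = 1 := by rw [hEdef]; nlinarith
    exact (inv_eq_of_mul_eq_one_right hmul)
  have hcosh : Real.cosh s = y := by
    rw [Real.cosh_eq, hexps, hsinv, hEdef]; ring
  -- evaluate B at -1
  refine ⟨Real.cosh ((2 * ℓ : ℕ) * s), ?_, ?_⟩
  · -- growth
    have hexpn : Real.exp ((2 * ℓ : ℕ) * s) = E ^ (2 * ℓ) := by
      rw [Real.exp_nat_mul, hexps]
    have hch : Real.exp ((2 * ℓ : ℕ) * s) / 2 ≤ Real.cosh ((2 * ℓ : ℕ) * s) := by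
      rw [Real.cosh_eq]
      have := Real.exp_pos (-((2 * ℓ : ℕ) * s))
      linarith
    have hEl : 1 + 4 * Real.pi ≤ E ^ ℓ := by
      have h1 := one_add_mul_le_pow (show (-2:ℝ) ≤ Real.pi * ε by nlinarith) ℓ
      have h2 : (1 + Real.pi * ε) ^ ℓ ≤ E ^ ℓ :=
        pow_le_pow_left₀ (by nlinarith) hE ℓ
      have h3 : (ℓ : ℝ) * (Real.pi * ε) = 4 * Real.pi := by
        rw [show (ℓ:ℝ) * (Real.pi * ε) = Real.pi * (ε * ℓ) by ring, hεℓ]; ring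
      linarith
    have hE2 : (169 : ℝ) ≤ E ^ (2 * ℓ) := by
      rw [show 2 * ℓ = ℓ * 2 by ring, pow_mul]
      nlinarith
    nlinarith
  · have hz : (-1 : ℂ) ≠ 0 := by norm_num
    rw [eval_B _ _ hcC (-1) hz]
    have hu : (((-1:ℂ)) ^ 2 - (1 + (c:ℂ)) * (-1) + 1) / ((1 - (c:ℂ)) * (-1)) = ((-y : ℝ) : ℂ) := by
      rw [hydef]
      rw [show ((-1:ℂ)) ^ 2 - (1 + (c:ℂ)) * (-1) + 1 = 3 + (c:ℂ) by ring,
        show (1 - (c:ℂ)) * (-1) = -(1 - (c:ℂ)) by ring, div_neg]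
      push_cast
      ring
    rw [hu]
    have hneg : ((-y : ℝ) : ℂ) = Complex.cos ((Real.pi : ℂ) + (s : ℂ) * Complex.I) := by
      rw [Complex.cos_add, Complex.cos_pi, Complex.sin_pi, Complex.cos_mul_I,
        ← Complex.ofReal_cosh, hcosh]
      push_cast
      ring
    rw [hneg, Polynomial.Chebyshev.T_complex_cos]
    have h1 : ((-1:ℂ)) ^ (2 * ℓ) = 1 := by rw [pow_mul]; norm_num
    rw [h1, one_mul]
    have harg : ((((2 * ℓ : ℕ) : ℤ)) : ℂ) * ((Real.pi : ℂ) + (s : ℂ) * Complex.I)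
        = (((2 * ℓ : ℕ) * s : ℝ) : ℂ) * Complex.I + ((ℓ : ℤ) : ℂ) * (2 * (Real.pi : ℂ)) := by
      push_cast; ring
    rw [harg, Complex.cos_add_int_mul_two_pi, Complex.cos_mul_I, Complex.ofReal_cosh]

lemma sum_parity {M : Type*} [AddCommMonoid M] (n : ℕ) (f : ℕ → M) :
    ∑ j ∈ Finset.range (2 * n + 1), f j
      = ∑ i ∈ Finset.range (n + 1), f (2 * i) + ∑ i ∈ Finset.range n, f (2 * i + 1) := by
  induction n with
  | zero => simp
  | succ n ih =>
    rw [show 2 * (n + 1) + 1 = (2 * n + 1) + 1 + 1 by ring, Finset.sum_range_succ,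
      Finset.sum_range_succ, ih, Finset.sum_range_succ (fun i => f (2 * i)) (n + 1),
      Finset.sum_range_succ (fun i => f (2 * i + 1)) n,
      show 2 * n + 1 + 1 = 2 * (n + 1) by ring]
    abel

lemma dw_lower (m : ℕ) (hm : 0 < m) (x y : ℕ) (hx : (x:ℝ) ≤ (m:ℝ) - 2)
    (hy : (y:ℝ) ≤ (m:ℝ) - 2) (hxy : 2 ≤ |(x:ℝ) - (y:ℝ)|) :
    2 / (m:ℝ) ≤ dw ((x:ℝ)/(m:ℝ)) ((y:ℝ)/(m:ℝ)) := by
  have hm' : (0:ℝ) < m := by exact_mod_cast hm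
  rw [dw]
  refine le_ciInf fun t => ?_
  rw [show (x:ℝ)/m - (y:ℝ)/m = ((x:ℝ) - y)/m by ring]
  rcases eq_or_ne t 0 with ht | ht
  · subst ht
    simp only [Int.cast_zero, add_zero]
    rw [abs_div, abs_of_pos hm']
    gcongr
  · have ht1 : (1:ℝ) ≤ |(t:ℝ)| := by
      rw [← Int.cast_abs]
      exact_mod_cast Int.one_le_abs ht
    have hx0 : (0:ℝ) ≤ (x:ℝ) := Nat.cast_nonneg x
    have hy0 : (0:ℝ) ≤ (y:ℝ) := Nat.cast_nonneg y
    have habs : |((x:ℝ)-y)/m| ≤ ((m:ℝ)-2)/m := by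
      rw [abs_div, abs_of_pos hm']
      gcongr
      rw [abs_le]
      constructor <;> linarith
    have h2 := abs_sub_abs_le_abs_sub ((t:ℝ)) (-(((x:ℝ)-y)/m))
    rw [abs_neg, sub_neg_eq_add] at h2
    have hfin : 2/(m:ℝ) = 1 - ((m:ℝ)-2)/m := by field_simp; ring
    rw [hfin, add_comm]
    linarith

end Stmt10Aux

open Stmt10Aux in
theorem stmt10 (ε : ℝ) (hε0 : 0 < ε) (hε1 : ε < 1) (ℓ r k m : ℕ)
    (hℓ : 0 < ℓ) (hℓε : (ℓ : ℝ) = 4 / ε) (hr : 0 < r)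
    (hk : k = 2 * r * ℓ + 1) (hmeven : Even m) (hmpos : 0 < m) (hm2k : 2 * k ≤ m)
    (Δ : ℝ) (hΔ : Δ = 2 / (m : ℝ)) :
    ∃ (S S' : Finset ℝ) (a b : ℝ → ℂ),
      Disjoint S S' ∧ S.Nonempty ∧ S'.Nonempty ∧
      (↑S ⊆ Set.Ico (0 : ℝ) 1) ∧ (↑S' ⊆ Set.Ico (0 : ℝ) 1) ∧
      S.card ≤ k ∧ S'.card ≤ k ∧
      (∀ f ∈ S, ∀ g ∈ S, f ≠ g → Δ ≤ dw f g) ∧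
      (∀ f ∈ S', ∀ g ∈ S', f ≠ g → Δ ≤ dw f g) ∧
      (∑ f ∈ S, ‖a f‖) + (∑ g ∈ S', ‖b g‖) = 1 ∧
      ∀ t : ℤ, (|t| : ℝ) ≤ (1 - ε) / Δ →
        ‖(∑ f ∈ S, a f * Complex.exp (2 * Real.pi * Complex.I * (f : ℂ) * (t : ℂ))) -
            (∑ g ∈ S', b g * Complex.exp (2 * Real.pi * Complex.I * (g : ℂ) * (t : ℂ)))‖
          ≤ (2 : ℝ) ^ (-(ε * ((k : ℝ) - 1) / 2)) := by
  classical
  have hm0 : (0:ℝ) < m := by exact_mod_cast hmpos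
  have hεℓ : ε * (ℓ : ℝ) = 4 := by rw [hℓε]; field_simp
  set K := 2 * r * ℓ with hKdef
  have hK0 : 0 < K := by positivity
  have hkK : k = K + 1 := hk
  have h2K : 2 * K + 2 ≤ m := by omega
  set p := 2 * ℓ with hpdef
  set c := Real.cos (Real.pi * (1 - ε)) with hcdef
  obtain ⟨M, hM32, hMeval⟩ := eval_B_neg_one ℓ hℓ ε hε0 hε1 hεℓ
  set Q := (B p (c : ℂ)) ^ r with hQdef
  have hdQ : Q.natDegree < 2 * K + 1 := by
    have h1 : Q.natDegree ≤ r * (B p (c:ℂ)).natDegree := Polynomial.natDegree_pow_le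
    have h2 : r * (B p (c:ℂ)).natDegree ≤ r * (2 * p) :=
      Nat.mul_le_mul_left _ (natDegree_B_le p (c:ℂ))
    have h3 : r * (2 * p) = 2 * K := by rw [hpdef, hKdef]; ring
    omega
  set L := ∑ j ∈ Finset.range (2 * K + 1), ‖Q.coeff j‖ with hLdef
  have hQm1 : Q.eval (-1) = ((M ^ r : ℝ) : ℂ) := by
    rw [hQdef, Polynomial.eval_pow, hMeval, Complex.ofReal_pow]
  have hMrpos : (0:ℝ) < M ^ r := by positivity
  have hL32 : (32:ℝ) ^ r ≤ L := by
    calc (32:ℝ) ^ r ≤ M ^ r := pow_le_pow_left₀ (by norm_num) hM32 r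
      _ = ‖Q.eval (-1)‖ := by
          rw [hQm1, Complex.norm_real, Real.norm_eq_abs, abs_of_pos hMrpos]
      _ ≤ L := by
          rw [Polynomial.eval_eq_sum_range' hdQ, hLdef]
          refine le_trans (norm_sum_le _ _) ?_
          refine le_of_eq (Finset.sum_congr rfl fun j hj => ?_)
          rw [norm_mul, norm_pow, norm_neg, norm_one, one_pow, mul_one]
  have hL0 : (0:ℝ) < L := lt_of_lt_of_le (by positivity) hL32
  have hLC : (L : ℂ) ≠ 0 := by exact_mod_cast hL0.ne'
  set a : ℝ → ℂ := fun x => Q.coeff ⌊x * m⌋₊ / (L : ℂ) with hadef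
  set b : ℝ → ℂ := fun x => -(Q.coeff ⌊x * m⌋₊ / (L : ℂ)) with hbdef
  set S : Finset ℝ := (Finset.range (K + 1)).image (fun i : ℕ => ((2 * i : ℕ) : ℝ) / m)
    with hSdef
  set S' : Finset ℝ := (Finset.range K).image (fun i : ℕ => ((2 * i + 1 : ℕ) : ℝ) / m)
    with hS'def
  have hdivinj : ∀ u v : ℕ, ((u:ℕ):ℝ)/(m:ℝ) = ((v:ℕ):ℝ)/(m:ℝ) → u = v := by
    intro u v h
    have h' : ((u:ℕ):ℝ) = ((v:ℕ):ℝ) := by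
      field_simp at h; exact_mod_cast h
    exact_mod_cast h'
  have hinjS : ∀ x ∈ Finset.range (K+1), ∀ y ∈ Finset.range (K+1),
      ((2*x : ℕ):ℝ)/(m:ℝ) = ((2*y : ℕ):ℝ)/(m:ℝ) → x = y := by
    intro x _ y _ h
    have := hdivinj (2*x) (2*y) h
    omega
  have hinjS' : ∀ x ∈ Finset.range K, ∀ y ∈ Finset.range K,
      ((2*x+1 : ℕ):ℝ)/(m:ℝ) = ((2*y+1 : ℕ):ℝ)/(m:ℝ) → x = y := by
    intro x _ y _ h
    have := hdivinj (2*x+1) (2*y+1) h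
    omega
  have hfl : ∀ u : ℕ, ⌊(((u:ℕ):ℝ)/(m:ℝ)) * m⌋₊ = u := by
    intro u
    rw [div_mul_cancel₀ _ (ne_of_gt hm0), Nat.floor_natCast]
  have haval : ∀ u : ℕ, a (((u:ℕ):ℝ)/(m:ℝ)) = Q.coeff u / (L:ℂ) := by
    intro u; rw [hadef]; simp only []; rw [hfl u]
  refine ⟨S, S', a, b, ?_, ?_, ?_, ?_, ?_, ?_, ?_, ?_, ?_, ?_, ?_⟩
  · -- disjoint
    rw [Finset.disjoint_left]
    intro x hx hx'
    rw [hSdef, Finset.mem_image] at hx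
    rw [hS'def, Finset.mem_image] at hx'
    obtain ⟨i, _, hi⟩ := hx
    obtain ⟨j, _, hj⟩ := hx'
    have := hdivinj (2*i) (2*j+1) (by rw [hi, hj])
    omega
  · exact ⟨_, Finset.mem_image_of_mem _ (Finset.mem_range.mpr (Nat.succ_pos K))⟩
  · exact ⟨_, Finset.mem_image_of_mem _ (Finset.mem_range.mpr hK0)⟩
  · -- S ⊆ Ico 0 1
    intro x hx
    rw [Finset.mem_coe, hSdef, Finset.mem_image] at hx
    obtain ⟨i, hi, rfl⟩ := hx
    rw [Finset.mem_range] at hi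
    constructor
    · positivity
    · rw [div_lt_one hm0]
      have : (2*i : ℕ) < m := by omega
      exact_mod_cast this
  · intro x hx
    rw [Finset.mem_coe, hS'def, Finset.mem_image] at hx
    obtain ⟨i, hi, rfl⟩ := hx
    rw [Finset.mem_range] at hi
    constructor
    · positivity
    · rw [div_lt_one hm0]
      have : (2*i+1 : ℕ) < m := by omega
      exact_mod_cast this
  · rw [hkK]
    exact le_trans Finset.card_image_le (by simp)
  · rw [hkK]
    exact le_trans Finset.card_image_le (by simp [Nat.le_succ])
  · -- separation in S
    intro f hf g hg hfg
    rw [hSdef, Finset.mem_image] at hf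
    rw [hSdef, Finset.mem_image] at hg
    obtain ⟨i, hi, rfl⟩ := hf
    obtain ⟨j, hj, rfl⟩ := hg
    rw [Finset.mem_range] at hi hj
    have hij : i ≠ j := fun h => hfg (by rw [h])
    rw [hΔ]
    apply dw_lower m hmpos
    · have h' : (2*i+2 : ℕ) ≤ m := by omega
      have h'' := (Nat.cast_le (α := ℝ)).mpr h'
      push_cast at h'' ⊢; linarith
    · have h' : (2*j+2 : ℕ) ≤ m := by omega
      have h'' := (Nat.cast_le (α := ℝ)).mpr h'
      push_cast at h'' ⊢; linarith
    · have h1' : (1:ℝ) ≤ |(i:ℝ) - (j:ℝ)| := by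
        rcases lt_or_gt_of_ne hij with h | h
        · have h5 : ((i+1:ℕ):ℝ) ≤ (j:ℝ) := by exact_mod_cast Nat.succ_le_of_lt h
          push_cast at h5
          rw [abs_sub_comm, abs_of_nonneg (by linarith)]
          linarith
        · have h5 : ((j+1:ℕ):ℝ) ≤ (i:ℝ) := by exact_mod_cast Nat.succ_le_of_lt h
          push_cast at h5
          rw [abs_of_nonneg (by linarith)]
          linarith
      have h3 : ((2*i:ℕ):ℝ) - ((2*j:ℕ):ℝ) = 2*((i:ℝ) - (j:ℝ)) := by push_cast; ring
      rw [h3, abs_mul, abs_two]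
      linarith
  · -- separation in S'
    intro f hf g hg hfg
    rw [hS'def, Finset.mem_image] at hf
    rw [hS'def, Finset.mem_image] at hg
    obtain ⟨i, hi, rfl⟩ := hf
    obtain ⟨j, hj, rfl⟩ := hg
    rw [Finset.mem_range] at hi hj
    have hij : i ≠ j := fun h => hfg (by rw [h])
    rw [hΔ]
    apply dw_lower m hmpos
    · have h' : (2*i+1+2 : ℕ) ≤ m := by omega
      have h'' := (Nat.cast_le (α := ℝ)).mpr h'
      push_cast at h'' ⊢; linarith
    · have h' : (2*j+1+2 : ℕ) ≤ m := by omega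
      have h'' := (Nat.cast_le (α := ℝ)).mpr h'
      push_cast at h'' ⊢; linarith
    · have h1' : (1:ℝ) ≤ |(i:ℝ) - (j:ℝ)| := by
        rcases lt_or_gt_of_ne hij with h | h
        · have h5 : ((i+1:ℕ):ℝ) ≤ (j:ℝ) := by exact_mod_cast Nat.succ_le_of_lt h
          push_cast at h5
          rw [abs_sub_comm, abs_of_nonneg (by linarith)]
          linarith
        · have h5 : ((j+1:ℕ):ℝ) ≤ (i:ℝ) := by exact_mod_cast Nat.succ_le_of_lt h
          push_cast at h5
          rw [abs_of_nonneg (by linarith)]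
          linarith
      have h3 : ((2*i+1:ℕ):ℝ) - ((2*j+1:ℕ):ℝ) = 2*((i:ℝ) - (j:ℝ)) := by push_cast; ring
      rw [h3, abs_mul, abs_two]
      linarith
  · -- normalization
    have habs_a : ∀ u:ℕ, ‖a (((u:ℕ):ℝ)/(m:ℝ))‖ = ‖Q.coeff u‖ / L := by
      intro u
      rw [haval u, norm_div, Complex.norm_real, Real.norm_eq_abs, abs_of_pos hL0]
    have habs_b : ∀ u:ℕ, ‖b (((u:ℕ):ℝ)/(m:ℝ))‖ = ‖Q.coeff u‖ / L := by
      intro u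
      have hb' : b (((u:ℕ):ℝ)/(m:ℝ)) = - a (((u:ℕ):ℝ)/(m:ℝ)) := rfl
      rw [hb', norm_neg, habs_a u]
    rw [hSdef, hS'def, Finset.sum_image hinjS, Finset.sum_image hinjS']
    rw [Finset.sum_congr rfl (fun i _ => habs_a (2*i)),
      Finset.sum_congr rfl (fun i _ => habs_b (2*i+1)),
      ← Finset.sum_div, ← Finset.sum_div, ← add_div]
    rw [← sum_parity K (fun j => ‖Q.coeff j‖)]
    exact div_self hL0.ne'
  · -- main bound
    intro t ht
    have hπ := Real.pi_pos
    have hΔsub : (1 - ε)/Δ = (1-ε) * m / 2 := by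
      rw [hΔ]; field_simp
    rw [hΔsub] at ht
    set θ : ℝ := 2 * Real.pi * (t:ℝ) / m with hθdef
    have hθb : |θ| ≤ Real.pi * (1 - ε) := by
      rw [hθdef, abs_div, abs_of_pos hm0, abs_mul,
        abs_of_pos (by positivity : (0:ℝ) < 2*Real.pi), div_le_iff₀ hm0]
      have habs : |(t:ℝ)| = ((|t| : ℤ) : ℝ) := (Int.cast_abs).symm
      rw [habs]
      nlinarith [ht, hπ]
    set w : ℂ := Complex.exp ((θ:ℂ) * Complex.I) with hwdef
    have harc : ‖Q.eval w‖ ≤ 1 := by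
      rw [hQdef, Polynomial.eval_pow, norm_pow]
      exact pow_le_one₀ (norm_nonneg _) (abs_eval_B_le p ε hε0 hε1 θ hθb)
    have hterm : ∀ u : ℕ, a (((u:ℕ):ℝ)/(m:ℝ)) *
        Complex.exp (2 * (Real.pi:ℂ) * Complex.I * (((((u:ℕ):ℝ)/(m:ℝ)) : ℝ):ℂ) * ((t:ℤ):ℂ))
          = Q.coeff u / (L:ℂ) * w^u := by
      intro u
      rw [haval u, hwdef, ← Complex.exp_nat_mul]
      congr 2
      rw [hθdef]
      push_cast
      ring
    have hb' : ∀ x : ℝ, b x = - a x := fun x => rfl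
    rw [hSdef, hS'def, Finset.sum_image hinjS, Finset.sum_image hinjS']
    rw [Finset.sum_congr rfl (fun i _ => hterm (2*i))]
    have e2 : ∑ i ∈ Finset.range K, b (((2*i+1:ℕ):ℝ)/(m:ℝ)) *
        Complex.exp (2 * (Real.pi:ℂ) * Complex.I * (((((2*i+1:ℕ):ℝ)/(m:ℝ)) : ℝ):ℂ) * ((t:ℤ):ℂ))
        = ∑ i ∈ Finset.range K, -(Q.coeff (2*i+1) / (L:ℂ) * w^(2*i+1)) := by
      refine Finset.sum_congr rfl fun i _ => ?_
      rw [hb' _, neg_mul, hterm (2*i+1)]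
    rw [e2]
    rw [Finset.sum_neg_distrib, sub_neg_eq_add, ← sum_parity K (fun j => Q.coeff j / (L:ℂ) * w^j)]
    have hev : ∑ j ∈ Finset.range (2*K+1), Q.coeff j / (L:ℂ) * w^j = Q.eval w / (L:ℂ) := by
      rw [Polynomial.eval_eq_sum_range' hdQ, Finset.sum_div]
      exact Finset.sum_congr rfl fun j _ => by ring
    rw [hev, norm_div, Complex.norm_real, Real.norm_eq_abs, abs_of_pos hL0]
    have hstep1 : ‖Q.eval w‖ / L ≤ 1 / L := by gcongr
    have hstep2 : (1:ℝ) / L ≤ 1 / 32^r := one_div_le_one_div_of_le (by positivity) hL32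
    have hexp : ε * ((k:ℝ)-1)/2 = 4*(r:ℝ) := by
      rw [hkK, hKdef]
      push_cast
      linear_combination (r:ℝ) * hεℓ
    have hrhs : (2:ℝ) ^ (-(ε * ((k:ℝ)-1)/2)) = (16^r)⁻¹ := by
      rw [hexp, Real.rpow_neg (by norm_num : (0:ℝ) ≤ 2),
        show (4*(r:ℝ)) = ((4*r : ℕ):ℝ) by push_cast; ring, Real.rpow_natCast,
        show (2:ℝ)^(4*r) = 16^r by rw [pow_mul]; norm_num]
    rw [hrhs]
    have hstep3 : (1:ℝ) / 32^r ≤ (16^r)⁻¹ := by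
      rw [one_div]
      exact inv_anti₀ (by positivity)
        (pow_le_pow_left₀ (by norm_num) (by norm_num) r)
    linarith
end

section
/- Let ℓ be a positive integer, let Δ > 0, let f_1, …, f_k ∈ [0,1) satisfy d_w(f_j, f_{j'}) ≥ Δ for all j ≠ j', let u_1, …, u_k ∈ ℂ, and set f(t) = Σ_{j=1}^k u_j e^{2πi f_j t}. With the Fejér coefficients c_t = (ℓ − |t|)/ℓ² for integers |t| ≤ ℓ, one has | Σ_{t=−ℓ}^{ℓ} c_t |f(t)|² − Σ_{j=1}^k |u_j|² | ≤ (π² / (12 ℓ² Δ²)) · Σ_{j=1}^k |u_j|². -/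
open Finset Real

namespace Stmt11Aux

/-- distance to nearest integer -/
noncomputable def w (x : ℝ) : ℝ := min (Int.fract x) (1 - Int.fract x)

lemma w_nonneg (x : ℝ) : 0 ≤ w x :=
  le_min (Int.fract_nonneg x) (by have := Int.fract_lt_one x; linarith)

lemma bddb (x : ℝ) : BddBelow (Set.range fun t : ℤ => |x + (t : ℝ)|) :=
  ⟨0, by rintro r ⟨t, rfl⟩; positivity⟩

lemma iInf_eq (x : ℝ) : (⨅ t : ℤ, |x + (t : ℝ)|) = w x := by
  apply le_antisymm
  · apply le_min
    · have h := ciInf_le (bddb x) (-⌊x⌋ : ℤ)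
      have h2 : |x + ((-⌊x⌋ : ℤ) : ℝ)| = Int.fract x := by
        rw [abs_of_nonneg]
        · push_cast; rw [Int.fract]; ring
        · push_cast
          have := Int.fract_nonneg x
          rw [Int.fract] at this; linarith
      rwa [h2] at h
    · have h := ciInf_le (bddb x) (-⌊x⌋ - 1 : ℤ)
      have h2 : |x + ((-⌊x⌋ - 1 : ℤ) : ℝ)| = 1 - Int.fract x := by
        rw [abs_of_nonpos]
        · push_cast; rw [Int.fract]; ring
        · push_cast
          have := Int.fract_lt_one x
          rw [Int.fract] at this; linarith
      rwa [h2] at h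
  · apply le_ciInf
    intro t
    have hx : x + (t : ℝ) = Int.fract x + ((⌊x⌋ + t : ℤ) : ℝ) := by
      push_cast; rw [Int.fract]; ring
    set n : ℤ := ⌊x⌋ + t with hn
    rcases le_or_gt 0 n with hpos | hneg
    · have : (0 : ℝ) ≤ (n : ℝ) := by exact_mod_cast hpos
      have h1 : w x ≤ Int.fract x := min_le_left _ _
      have := Int.fract_nonneg x
      rw [hx, abs_of_nonneg (by linarith)]
      linarith
    · have hneg' : n ≤ -1 := by omega
      have : (n : ℝ) ≤ -1 := by exact_mod_cast hneg'
      have h1 : w x ≤ 1 - Int.fract x := min_le_right _ _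
      have := Int.fract_lt_one x
      rw [hx, abs_of_nonpos (by linarith)]
      linarith

lemma dw_eq (p q : ℝ) : dw p q = w (p - q) := iInf_eq (p - q)

lemma w_neg (x : ℝ) : w (-x) = w x := by
  rcases eq_or_ne (Int.fract x) 0 with h | h
  · rw [w, w, Int.fract_neg_eq_zero.mpr h, h]
  · rw [w, w, Int.fract_neg h]
    rw [min_comm]
    norm_num

/-- |sin(πx)| ≥ 2·(distance of x to nearest integer) -/
lemma sin_ge (x : ℝ) : 2 * w x ≤ |Real.sin (π * x)| := by
  have hper : |Real.sin (π * x)| = |Real.sin (π * Int.fract x)| := by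
    have hx : π * x = π * Int.fract x + (⌊x⌋ : ℤ) * π := by
      rw [Int.fract]; push_cast; ring
    rw [hx, Real.sin_add_int_mul_pi, abs_mul]
    have h1 : |((-1 : ℝ) ^ ⌊x⌋)| = 1 := by
      rcases Int.even_or_odd ⌊x⌋ with he | ho
      · rw [he.neg_one_zpow]; norm_num
      · rw [Odd.neg_one_zpow ho]; norm_num
    rw [h1, one_mul]
  rw [hper]
  set y := Int.fract x with hy
  have hy0 : 0 ≤ y := Int.fract_nonneg x
  have hy1 : y < 1 := Int.fract_lt_one x
  have hw : w x = min y (1 - y) := rfl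
  rcases le_or_gt y (1 / 2) with hc | hc
  · have hs : 0 ≤ Real.sin (π * y) :=
      Real.sin_nonneg_of_nonneg_of_le_pi (by positivity)
        (by nlinarith [Real.pi_pos])
    rw [abs_of_nonneg hs]
    have hb := Real.mul_le_sin (x := π * y) (by positivity)
      (by nlinarith [Real.pi_pos])
    have hpi : (0:ℝ) < π := Real.pi_pos
    have : 2 / π * (π * y) = 2 * y := by field_simp
    rw [this] at hb
    have : w x ≤ y := hw ▸ min_le_left _ _
    linarith
  · have hsub : Real.sin (π * y) = Real.sin (π * (1 - y)) := by
      rw [show π * (1 - y) = π - π * y by ring, Real.sin_pi_sub]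
    have hs : 0 ≤ Real.sin (π * (1 - y)) :=
      Real.sin_nonneg_of_nonneg_of_le_pi (by nlinarith [Real.pi_pos])
        (by nlinarith [Real.pi_pos])
    rw [hsub, abs_of_nonneg hs]
    have hb := Real.mul_le_sin (x := π * (1 - y)) (by nlinarith [Real.pi_pos])
      (by nlinarith [Real.pi_pos])
    have hpi : (0:ℝ) < π := Real.pi_pos
    have : 2 / π * (π * (1 - y)) = 2 * (1 - y) := by field_simp
    rw [this] at hb
    have : w x ≤ 1 - y := hw ▸ min_le_right _ _
    linarith

lemma abs_exp_sub_one (θ : ℝ) :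
    ‖Complex.exp ((θ : ℂ) * Complex.I) - 1‖ = 2 * |Real.sin (θ / 2)| := by
  set c : ℂ := (θ : ℂ) with hc
  have e1 : Complex.exp (c * Complex.I) = Complex.exp (c / 2 * Complex.I) *
      Complex.exp (c / 2 * Complex.I) := by
    rw [← Complex.exp_add]; ring_nf
  have e2 : Complex.exp (c / 2 * Complex.I) * Complex.exp (-(c / 2) * Complex.I) = 1 := by
    rw [← Complex.exp_add, show c / 2 * Complex.I + -(c / 2) * Complex.I = 0 by ring,
      Complex.exp_zero]
  have key : Complex.exp (c * Complex.I) - 1 =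
      Complex.exp (c / 2 * Complex.I) * (2 * Complex.I * Complex.sin (c / 2)) := by
    rw [Complex.sin]
    linear_combination e1 + e2 + (Complex.exp (c / 2 * Complex.I) ^ 2 -
      Complex.exp (c / 2 * Complex.I) * Complex.exp (-(c / 2) * Complex.I)) * Complex.I_mul_I
  rw [key, norm_mul, norm_mul, norm_mul, Complex.norm_exp, Complex.norm_two, Complex.norm_I]
  have hre : (c / 2 * Complex.I).re = 0 := by
    simp [hc]
  rw [hre, Real.exp_zero]
  have : Complex.sin (c / 2) = ((Real.sin (θ / 2) : ℝ) : ℂ) := by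
    rw [hc, show (θ : ℂ) / 2 = ((θ / 2 : ℝ) : ℂ) by push_cast; ring, Complex.ofReal_sin]
  rw [this, Complex.norm_real, Real.norm_eq_abs]; ring

/-- the exponential `e(x) = exp(2πix)` -/
noncomputable def ee (x : ℝ) : ℂ := Complex.exp (2 * (π : ℂ) * Complex.I * (x : ℝ))

lemma abs_ee (x : ℝ) : ‖ee x‖ = 1 := by
  rw [ee, Complex.norm_exp]
  simp

lemma ee_zero : ee 0 = 1 := by simp [ee]

lemma ee_ne_one {x : ℝ} (hx : 0 < w x) : ee x ≠ 1 := by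
  intro h
  rw [ee, Complex.exp_eq_one_iff] at h
  obtain ⟨n, hn⟩ := h
  have h2 : (2 * (π : ℂ) * Complex.I) * (x : ℂ) = (2 * (π : ℂ) * Complex.I) * (n : ℂ) := by
    rw [hn]; ring
  have hne : (2 * (π : ℂ) * Complex.I) ≠ 0 := by
    simp [Real.pi_ne_zero, Complex.I_ne_zero, Complex.ofReal_ne_zero]
  have h3 : (x : ℂ) = (n : ℂ) := mul_left_cancel₀ hne h2
  have h4 : x = (n : ℝ) := by exact_mod_cast h3
  rw [h4] at hx
  simp [w, Int.fract_intCast] at hx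

lemma abs_ee_sub_one (x : ℝ) : ‖ee x - 1‖ = 2 * |Real.sin (π * x)| := by
  have : ee x = Complex.exp (((2 * π * x : ℝ) : ℂ) * Complex.I) := by
    rw [ee]; congr 1; push_cast; ring
  rw [this, abs_exp_sub_one]
  congr 2; ring

/-- bound on the geometric sum -/
lemma D_bound (ℓ : ℕ) {x : ℝ} (hx : 0 < w x) :
    ‖∑ a ∈ range ℓ, ee x ^ a‖ ≤ 1 / (2 * w x) := by
  have hne := ee_ne_one hx
  rw [geom_sum_eq hne, norm_div]
  have hnum : ‖ee x ^ ℓ - 1‖ ≤ 2 := by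
    calc ‖ee x ^ ℓ - 1‖ ≤ ‖ee x ^ ℓ‖ + ‖1‖ :=
          norm_sub_le (ee x ^ ℓ) (1 : ℂ)
    _ = 2 := by rw [norm_pow, abs_ee, one_pow, norm_one]; norm_num
  have hden : 4 * w x ≤ ‖ee x - 1‖ := by
    rw [abs_ee_sub_one]
    have := sin_ge x
    linarith
  have h4 : (0:ℝ) < 4 * w x := by linarith
  calc ‖ee x ^ ℓ - 1‖ / ‖ee x - 1‖ ≤ 2 / (4 * w x) :=
        div_le_div₀ (by norm_num) hnum h4 hden
  _ = 1 / (2 * w x) := by rw [div_eq_div_iff (by linarith) (by linarith)]; ring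

lemma fiber_card (ℓ : ℕ) (t : ℤ) :
    ((range ℓ ×ˢ range ℓ).filter (fun p => (p.1 : ℤ) - (p.2 : ℤ) = t)).card
      = ℓ - t.natAbs := by
  have himg : (range ℓ ×ˢ range ℓ).filter (fun p => (p.1 : ℤ) - (p.2 : ℤ) = t)
      = (range (ℓ - t.natAbs)).image (fun i => (i + t.toNat, i + (-t).toNat)) := by
    ext ⟨a, b⟩
    simp only [mem_filter, mem_product, mem_range, mem_image, Prod.mk.injEq]
    constructor
    · rintro ⟨⟨ha, hb⟩, hab⟩
      exact ⟨a - t.toNat, by omega, by omega, by omega⟩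
    · rintro ⟨i, hi, h1, h2⟩
      omega
  rw [himg, Finset.card_image_of_injective _ (fun i j h => by
    simpa using congrArg Prod.fst h), Finset.card_range]

/-- convolution identity for the Fejér weights -/
lemma conv (ℓ : ℕ) (g : ℤ → ℂ) :
    ∑ t ∈ Finset.Icc (-(ℓ : ℤ)) (ℓ : ℤ), ((ℓ - |t| : ℤ) : ℂ) * g t
      = ∑ a ∈ range ℓ, ∑ b ∈ range ℓ, g ((a : ℤ) - b) := by
  rw [← Finset.sum_product' (s := range ℓ) (t := range ℓ)
    (f := fun a b => g ((a : ℤ) - b))]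
  rw [← Finset.sum_fiberwise_of_maps_to (g := fun p : ℕ × ℕ => (p.1 : ℤ) - p.2)
    (t := Finset.Icc (-(ℓ : ℤ)) (ℓ : ℤ))
    (fun p hp => by
      simp only [mem_product, mem_range] at hp
      simp only [Finset.mem_Icc]
      omega)]
  apply Finset.sum_congr rfl
  intro t ht
  have hsum : ∑ p ∈ (range ℓ ×ˢ range ℓ).filter (fun p : ℕ × ℕ => (p.1 : ℤ) - p.2 = t),
      g ((p.1 : ℤ) - p.2)
      = ∑ _p ∈ (range ℓ ×ˢ range ℓ).filter (fun p : ℕ × ℕ => (p.1 : ℤ) - p.2 = t), g t :=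
    Finset.sum_congr rfl (fun p hp => by rw [(Finset.mem_filter.mp hp).2])
  rw [hsum]
  rw [Finset.sum_const, fiber_card ℓ t, nsmul_eq_mul]
  have hmem := Finset.mem_Icc.mp ht
  have h2 : ((ℓ - t.natAbs : ℕ) : ℤ) = (ℓ : ℤ) - |t| := by
    rw [Int.abs_eq_natAbs]; omega
  congr 1
  exact_mod_cast congrArg (fun z : ℤ => (z : ℂ)) h2.symm

lemma exp_pair (x y : ℝ) (a b : ℕ) :
    Complex.exp (2 * (π : ℂ) * Complex.I * (x : ℂ) * (((a : ℤ) - (b : ℤ) : ℤ) : ℂ)) *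
      (starRingEnd ℂ) (Complex.exp (2 * (π : ℂ) * Complex.I * (y : ℂ) * (((a : ℤ) - (b : ℤ) : ℤ) : ℂ)))
      = ee (x - y) ^ a * (starRingEnd ℂ) (ee (x - y) ^ b) := by
  simp only [ee, map_pow, ← Complex.exp_conj, ← Complex.exp_nat_mul]
  rw [← Complex.exp_add, ← Complex.exp_add]
  congr 1
  simp only [map_mul, map_sub, map_ofNat, Complex.conj_I, Complex.conj_ofReal,
    map_natCast, map_intCast]
  push_cast
  ring

end Stmt11Aux

open Stmt11Aux

set_option maxHeartbeats 1000000 in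
theorem stmt11 (ℓ k : ℕ) (hℓ : 0 < ℓ) (Δ : ℝ) (hΔ : 0 < Δ)
    (f : Fin k → ℝ) (hf : ∀ j, f j ∈ Set.Ico (0 : ℝ) 1)
    (hsep : ∀ j j', j ≠ j' → Δ ≤ dw (f j) (f j'))
    (u : Fin k → ℂ) (F : ℤ → ℂ)
    (hF : ∀ t : ℤ, F t = ∑ j, u j * Complex.exp (2 * Real.pi * Complex.I * (f j : ℂ) * (t : ℂ))) :
    |(∑ t ∈ Finset.Icc (-(ℓ : ℤ)) (ℓ : ℤ),
        (((ℓ : ℝ) - (|t| : ℤ)) / (ℓ : ℝ) ^ 2) * ‖F t‖ ^ 2) -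
      ∑ j, ‖u j‖ ^ 2|
      ≤ (Real.pi ^ 2 / (12 * (ℓ : ℝ) ^ 2 * Δ ^ 2)) * ∑ j, ‖u j‖ ^ 2 := by
  classical
  have hl0 : (0 : ℝ) < (ℓ : ℝ) := by exact_mod_cast hℓ
  have hlc : ((ℓ : ℂ)) ≠ 0 := by exact_mod_cast (ne_of_gt hℓ)
  set S : ℝ := ∑ j, ‖u j‖ ^ 2 with hSdef
  have hS0 : 0 ≤ S := Finset.sum_nonneg fun j _ => by positivity
  have hsep' : ∀ j j' : Fin k, j ≠ j' → Δ ≤ w (f j - f j') := fun j j' h => by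
    have := hsep j j' h; rwa [dw_eq] at this
  -- counting lemma
  have hB : ∀ j : Fin k, ∑ j' ∈ Finset.univ.erase j, 1 / w (f j - f j') ^ 2
      ≤ π ^ 2 / (3 * Δ ^ 2) := by
    intro j
    set m : Fin k → ℕ := fun j' => ⌊w (f j' - f j) / Δ⌋₊ with hm
    set sd : Fin k → Bool := fun j' => decide (Int.fract (f j' - f j) ≤ 1 / 2) with hsd
    have hsymm : ∀ j' : Fin k, w (f j - f j') = w (f j' - f j) := fun j' => by
      rw [show f j - f j' = -(f j' - f j) by ring, w_neg]
    have hwD : ∀ j' ∈ Finset.univ.erase j, Δ ≤ w (f j' - f j) := fun j' hj' =>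
      hsep' j' j (Finset.mem_erase.mp hj').1
    have hm1 : ∀ j' ∈ Finset.univ.erase j, 1 ≤ m j' := by
      intro j' hj'
      apply Nat.le_floor
      rw [Nat.cast_one, le_div_iff₀ hΔ, one_mul]
      exact hwD _ hj'
    have hmle : ∀ j' ∈ Finset.univ.erase j, (m j' : ℝ) * Δ ≤ w (f j' - f j) := by
      intro j' hj'
      have h1 := Nat.floor_le (show 0 ≤ w (f j' - f j) / Δ from
        div_nonneg (w_nonneg _) hΔ.le)
      calc (m j' : ℝ) * Δ ≤ (w (f j' - f j) / Δ) * Δ :=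
            mul_le_mul_of_nonneg_right h1 hΔ.le
      _ = w (f j' - f j) := div_mul_cancel₀ _ hΔ.ne'
    -- injectivity of j' ↦ (m j', sd j') on the erase set
    have hinj : ∀ j1 ∈ Finset.univ.erase j, ∀ j2 ∈ Finset.univ.erase j,
        (m j1, sd j1) = (m j2, sd j2) → j1 = j2 := by
      intro j1 h1 j2 h2 heq
      by_contra hne
      have hmeq : m j1 = m j2 := congrArg Prod.fst heq
      have hseq : sd j1 = sd j2 := congrArg Prod.snd heq
      set a := Int.fract (f j1 - f j) with ha
      set b := Int.fract (f j2 - f j) with hb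
      have ha0 : 0 ≤ a := Int.fract_nonneg _
      have ha1 : a < 1 := Int.fract_lt_one _
      have hb0 : 0 ≤ b := Int.fract_nonneg _
      have hb1 : b < 1 := Int.fract_lt_one _
      have hwa : w (f j1 - f j) = min a (1 - a) := rfl
      have hwb : w (f j2 - f j) = min b (1 - b) := rfl
      -- |a - b| < Δ
      have floordiff : ∀ c d : ℝ, 0 ≤ c → 0 ≤ d → ⌊c / Δ⌋₊ = ⌊d / Δ⌋₊ → |c - d| < Δ := by
        intro c d hc hd hcd
        have h1 : (⌊c / Δ⌋₊ : ℝ) ≤ c / Δ := Nat.floor_le (by positivity)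
        have h2 : c / Δ < ⌊c / Δ⌋₊ + 1 := Nat.lt_floor_add_one _
        have h3 : (⌊d / Δ⌋₊ : ℝ) ≤ d / Δ := Nat.floor_le (by positivity)
        have h4 : d / Δ < ⌊d / Δ⌋₊ + 1 := Nat.lt_floor_add_one _
        rw [hcd] at h1 h2
        rw [div_lt_iff₀ hΔ] at h2 h4
        rw [le_div_iff₀ hΔ] at h1 h3
        rw [abs_sub_lt_iff]
        constructor <;> nlinarith
      have key : |a - b| < Δ := by
        simp only [hsd] at hseq
        rw [← ha, ← hb, decide_eq_decide] at hseq
        by_cases hside : a ≤ 1 / 2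
        · have hsideb : b ≤ 1 / 2 := hseq.mp hside
          have hwa' : w (f j1 - f j) = a := by
            rw [hwa, min_eq_left (by linarith)]
          have hwb' : w (f j2 - f j) = b := by
            rw [hwb, min_eq_left (by linarith)]
          apply floordiff a b ha0 hb0
          have := hmeq
          rw [hm] at this
          simpa only [hwa', hwb'] using this
        · have hsideb : ¬ (b ≤ 1 / 2) := fun hb' => hside (hseq.mpr hb')
          push_neg at hside hsideb
          have hwa' : w (f j1 - f j) = 1 - a := by
            rw [hwa, min_eq_right (by linarith)]
          have hwb' : w (f j2 - f j) = 1 - b := by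
            rw [hwb, min_eq_right (by linarith)]
          have hkey : |(1 - a) - (1 - b)| < Δ := by
            apply floordiff (1 - a) (1 - b) (by linarith) (by linarith)
            have := hmeq
            rw [hm] at this
            simpa only [hwa', hwb'] using this
          rw [show (1 - a) - (1 - b) = -(a - b) by ring, abs_neg] at hkey
          exact hkey
      -- contradiction with separation
      have hcast : f j1 - f j2 + ((⌊f j2 - f j⌋ - ⌊f j1 - f j⌋ : ℤ) : ℝ) = a - b := by
        rw [ha, hb]; simp only [Int.fract]; push_cast; ring
      have hle : dw (f j1) (f j2) ≤ |a - b| := by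
        rw [← hcast]
        exact ciInf_le (bddb (f j1 - f j2)) _
      have := hsep j1 j2 hne
      linarith
    -- sum bound via image
    have step1 : ∑ j' ∈ Finset.univ.erase j, 1 / w (f j - f j') ^ 2
        ≤ ∑ j' ∈ Finset.univ.erase j, 1 / ((m j' : ℝ) * Δ) ^ 2 := by
      apply Finset.sum_le_sum
      intro j' hj'
      rw [hsymm j']
      have h1 := hm1 j' hj'
      have h2 := hmle j' hj'
      have hpos : 0 < (m j' : ℝ) * Δ := by
        have : (1 : ℝ) ≤ (m j' : ℝ) := by exact_mod_cast h1
        nlinarith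
      apply one_div_le_one_div_of_le (by positivity)
      nlinarith
    have step2 : ∑ j' ∈ Finset.univ.erase j, 1 / ((m j' : ℝ) * Δ) ^ 2
        = (1 / Δ ^ 2) * ∑ j' ∈ Finset.univ.erase j, 1 / ((m j' : ℝ)) ^ 2 := by
      rw [Finset.mul_sum]
      apply Finset.sum_congr rfl
      intro j' _
      rw [mul_pow]
      ring
    set N : ℕ := (Finset.univ.erase j).sup m with hN
    have step3 : ∑ j' ∈ Finset.univ.erase j, 1 / ((m j' : ℝ)) ^ 2
        ≤ ∑ p ∈ (Finset.Icc 1 N) ×ˢ (Finset.univ : Finset Bool), 1 / ((p.1 : ℝ)) ^ 2 := by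
      have himg : ∑ p ∈ (Finset.univ.erase j).image (fun j' => (m j', sd j')),
          1 / ((p.1 : ℝ)) ^ 2 = ∑ j' ∈ Finset.univ.erase j, 1 / ((m j' : ℝ)) ^ 2 :=
        Finset.sum_image hinj
      rw [← himg]
      apply Finset.sum_le_sum_of_subset_of_nonneg
      · intro p hp
        obtain ⟨j', hj', rfl⟩ := Finset.mem_image.mp hp
        simp only [Finset.mem_product, Finset.mem_Icc, Finset.mem_univ, and_true]
        exact ⟨hm1 j' hj', Finset.le_sup hj'⟩
      · intro p _ _
        positivity
    have step4 : ∑ p ∈ (Finset.Icc 1 N) ×ˢ (Finset.univ : Finset Bool), 1 / ((p.1 : ℝ)) ^ 2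
        ≤ 2 * (π ^ 2 / 6) := by
      rw [Finset.sum_product]
      have hicc : ∑ n ∈ Finset.Icc 1 N, (1 : ℝ) / (n : ℝ) ^ 2 ≤ π ^ 2 / 6 := by
        calc ∑ n ∈ Finset.Icc 1 N, (1 : ℝ) / (n : ℝ) ^ 2
            ≤ ∑ n ∈ Finset.range (N + 1), (1 : ℝ) / (n : ℝ) ^ 2 := by
              apply Finset.sum_le_sum_of_subset_of_nonneg
              · intro n hn
                simp only [Finset.mem_Icc] at hn
                simp only [Finset.mem_range]
                omega
              · intro n _ _; positivity
        _ ≤ π ^ 2 / 6 := sum_le_hasSum _ (fun i _ => by positivity) hasSum_zeta_two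
      calc ∑ n ∈ Finset.Icc 1 N, ∑ _b : Bool, 1 / ((n : ℝ)) ^ 2
          = 2 * ∑ n ∈ Finset.Icc 1 N, (1 : ℝ) / (n : ℝ) ^ 2 := by
            rw [Finset.mul_sum]
            apply Finset.sum_congr rfl
            intro n _
            simp [two_mul]
      _ ≤ 2 * (π ^ 2 / 6) := by linarith
    calc ∑ j' ∈ Finset.univ.erase j, 1 / w (f j - f j') ^ 2
        ≤ (1 / Δ ^ 2) * ∑ j' ∈ Finset.univ.erase j, 1 / ((m j' : ℝ)) ^ 2 := by
          rw [← step2]; exact step1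
    _ ≤ (1 / Δ ^ 2) * (2 * (π ^ 2 / 6)) := by
          apply mul_le_mul_of_nonneg_left _ (by positivity)
          exact le_trans step3 step4
    _ = π ^ 2 / (3 * Δ ^ 2) := by
          field_simp
          ring
  -- notation
  set D : ℝ → ℂ := fun x => ∑ a ∈ Finset.range ℓ, ee x ^ a with hD
  set A : ℝ := ∑ t ∈ Finset.Icc (-(ℓ : ℤ)) (ℓ : ℤ),
      (((ℓ : ℝ) - (|t| : ℤ)) / (ℓ : ℝ) ^ 2) * ‖F t‖ ^ 2 with hAdef
  set R : ℂ := ∑ j, ∑ j' ∈ Finset.univ.erase j,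
      (u j * (starRingEnd ℂ) (u j')) * (D (f j - f j') * (starRingEnd ℂ) (D (f j - f j'))) with hR
  have habs : ∀ z : ℂ, ((‖z‖ ^ 2 : ℝ) : ℂ) = z * (starRingEnd ℂ) z := fun z => by
    rw [← Complex.normSq_eq_norm_sq, Complex.mul_conj]
  -- step 1 : pull out 1/ℓ² and convert abs² to z * conj z
  have step1 : (A : ℂ) = (1 / (ℓ : ℂ) ^ 2) * ∑ t ∈ Finset.Icc (-(ℓ : ℤ)) (ℓ : ℤ),
      ((ℓ - |t| : ℤ) : ℂ) * (F t * (starRingEnd ℂ) (F t)) := by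
    rw [hAdef, Complex.ofReal_sum, Finset.mul_sum]
    apply Finset.sum_congr rfl
    intro t _
    rw [Complex.ofReal_mul, habs (F t)]
    have hcoef : (((((ℓ : ℝ) - (|t| : ℤ)) / (ℓ : ℝ) ^ 2 : ℝ)) : ℂ)
        = (1 / (ℓ : ℂ) ^ 2) * ((ℓ - |t| : ℤ) : ℂ) := by
      rw [show ((ℓ - |t| : ℤ) : ℂ) = ((((ℓ - |t| : ℤ) : ℝ)) : ℂ) by norm_cast,
        show (1 / (ℓ : ℂ) ^ 2) = (((1 / (ℓ : ℝ) ^ 2 : ℝ)) : ℂ) by push_cast; ring,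
        ← Complex.ofReal_mul]
      congr 1
      push_cast
      ring
    rw [hcoef]
    ring
  -- step 2 : convolution identity
  have step2 : ∑ t ∈ Finset.Icc (-(ℓ : ℤ)) (ℓ : ℤ),
      ((ℓ - |t| : ℤ) : ℂ) * (F t * (starRingEnd ℂ) (F t))
      = ∑ a ∈ Finset.range ℓ, ∑ b ∈ Finset.range ℓ,
        (F ((a : ℤ) - b) * (starRingEnd ℂ) (F ((a : ℤ) - b))) :=
    conv ℓ (fun t => F t * (starRingEnd ℂ) (F t))
  -- step 3 : expand the square
  have hFt : ∀ a b : ℕ, F ((a : ℤ) - b) * (starRingEnd ℂ) (F ((a : ℤ) - b))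
      = ∑ j, ∑ j', (u j * (starRingEnd ℂ) (u j')) *
        (ee (f j - f j') ^ a * (starRingEnd ℂ) (ee (f j - f j') ^ b)) := by
    intro a b
    rw [hF, map_sum, Finset.sum_mul_sum]
    apply Finset.sum_congr rfl
    intro j _
    apply Finset.sum_congr rfl
    intro j' _
    rw [map_mul]
    have hp := exp_pair (f j) (f j') a b
    calc u j * Complex.exp (2 * (π : ℂ) * Complex.I * (f j : ℂ) * (((a : ℤ) - b : ℤ) : ℂ)) *
          ((starRingEnd ℂ) (u j') *
            (starRingEnd ℂ) (Complex.exp (2 * (π : ℂ) * Complex.I * (f j' : ℂ) * (((a : ℤ) - b : ℤ) : ℂ))))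
        = (u j * (starRingEnd ℂ) (u j')) *
          (Complex.exp (2 * (π : ℂ) * Complex.I * (f j : ℂ) * (((a : ℤ) - b : ℤ) : ℂ)) *
            (starRingEnd ℂ) (Complex.exp (2 * (π : ℂ) * Complex.I * (f j' : ℂ) * (((a : ℤ) - b : ℤ) : ℂ)))) := by
          ring
    _ = (u j * (starRingEnd ℂ) (u j')) *
          (ee (f j - f j') ^ a * (starRingEnd ℂ) (ee (f j - f j') ^ b)) := by rw [hp]
  -- step 4 : swap sums and recombine geometric sums
  have swap : ∀ T : ℕ → ℕ → Fin k → Fin k → ℂ,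
      ∑ a ∈ Finset.range ℓ, ∑ b ∈ Finset.range ℓ, ∑ j, ∑ j', T a b j j'
        = ∑ j, ∑ j', ∑ a ∈ Finset.range ℓ, ∑ b ∈ Finset.range ℓ, T a b j j' := by
    intro T
    calc ∑ a ∈ Finset.range ℓ, ∑ b ∈ Finset.range ℓ, ∑ j, ∑ j', T a b j j'
        = ∑ a ∈ Finset.range ℓ, ∑ j, ∑ b ∈ Finset.range ℓ, ∑ j', T a b j j' :=
          Finset.sum_congr rfl fun a _ => Finset.sum_comm
    _ = ∑ j, ∑ a ∈ Finset.range ℓ, ∑ b ∈ Finset.range ℓ, ∑ j', T a b j j' :=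
          Finset.sum_comm
    _ = ∑ j, ∑ a ∈ Finset.range ℓ, ∑ j', ∑ b ∈ Finset.range ℓ, T a b j j' :=
          Finset.sum_congr rfl fun j _ => Finset.sum_congr rfl fun a _ => Finset.sum_comm
    _ = ∑ j, ∑ j', ∑ a ∈ Finset.range ℓ, ∑ b ∈ Finset.range ℓ, T a b j j' :=
          Finset.sum_congr rfl fun j _ => Finset.sum_comm
  have hDD : ∀ x : ℝ, D x * (starRingEnd ℂ) (D x)
      = ∑ a ∈ Finset.range ℓ, ∑ b ∈ Finset.range ℓ, ee x ^ a * (starRingEnd ℂ) (ee x ^ b) := by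
    intro x
    rw [hD]
    simp only [map_sum]
    rw [Finset.sum_mul_sum]
  have step4 : ∑ a ∈ Finset.range ℓ, ∑ b ∈ Finset.range ℓ,
      (F ((a : ℤ) - b) * (starRingEnd ℂ) (F ((a : ℤ) - b)))
      = ∑ j, ∑ j', (u j * (starRingEnd ℂ) (u j')) *
        (D (f j - f j') * (starRingEnd ℂ) (D (f j - f j'))) := by
    calc ∑ a ∈ Finset.range ℓ, ∑ b ∈ Finset.range ℓ,
        (F ((a : ℤ) - b) * (starRingEnd ℂ) (F ((a : ℤ) - b)))
        = ∑ a ∈ Finset.range ℓ, ∑ b ∈ Finset.range ℓ, ∑ j, ∑ j',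
            (u j * (starRingEnd ℂ) (u j')) *
            (ee (f j - f j') ^ a * (starRingEnd ℂ) (ee (f j - f j') ^ b)) :=
          Finset.sum_congr rfl fun a _ => Finset.sum_congr rfl fun b _ => hFt a b
    _ = ∑ j, ∑ j', ∑ a ∈ Finset.range ℓ, ∑ b ∈ Finset.range ℓ,
            (u j * (starRingEnd ℂ) (u j')) *
            (ee (f j - f j') ^ a * (starRingEnd ℂ) (ee (f j - f j') ^ b)) := swap _
    _ = ∑ j, ∑ j', (u j * (starRingEnd ℂ) (u j')) *
            (D (f j - f j') * (starRingEnd ℂ) (D (f j - f j'))) := by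
          apply Finset.sum_congr rfl
          intro j _
          apply Finset.sum_congr rfl
          intro j' _
          rw [hDD, Finset.mul_sum]
          apply Finset.sum_congr rfl
          intro a _
          rw [Finset.mul_sum]
  -- step 5 : split diagonal
  have hD0 : D 0 = (ℓ : ℂ) := by
    rw [hD]
    simp [ee_zero]
  have hdiag : ∀ j : Fin k, (u j * (starRingEnd ℂ) (u j)) * (D 0 * (starRingEnd ℂ) (D 0))
      = ((‖u j‖ ^ 2 : ℝ) : ℂ) * (ℓ : ℂ) ^ 2 := by
    intro j
    rw [hD0, habs (u j)]
    have : (starRingEnd ℂ) ((ℓ : ℕ) : ℂ) = ((ℓ : ℕ) : ℂ) := by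
      rw [map_natCast]
    rw [this]
    ring
  have step5 : ∑ j, ∑ j', (u j * (starRingEnd ℂ) (u j')) *
      (D (f j - f j') * (starRingEnd ℂ) (D (f j - f j')))
      = (ℓ : ℂ) ^ 2 * (S : ℂ) + R := by
    have hsplit : ∀ j : Fin k, ∑ j', (u j * (starRingEnd ℂ) (u j')) *
        (D (f j - f j') * (starRingEnd ℂ) (D (f j - f j')))
        = ((‖u j‖ ^ 2 : ℝ) : ℂ) * (ℓ : ℂ) ^ 2
          + ∑ j' ∈ Finset.univ.erase j, (u j * (starRingEnd ℂ) (u j')) *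
            (D (f j - f j') * (starRingEnd ℂ) (D (f j - f j'))) := by
      intro j
      rw [← Finset.add_sum_erase _ _ (Finset.mem_univ j)]
      congr 1
      rw [show f j - f j = 0 by ring]
      exact hdiag j
    have hlS : (ℓ : ℂ) ^ 2 * (S : ℂ) = ∑ j, ((‖u j‖ ^ 2 : ℝ) : ℂ) * (ℓ : ℂ) ^ 2 := by
      rw [hSdef, Complex.ofReal_sum, Finset.mul_sum]
      exact Finset.sum_congr rfl fun j _ => by ring
    rw [Finset.sum_congr rfl fun j _ => hsplit j, Finset.sum_add_distrib, ← hR, hlS]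
  -- the identity
  have hA : (A : ℂ) = (S : ℂ) + (1 / (ℓ : ℂ) ^ 2) * R := by
    rw [step1, step2, step4, step5]
    field_simp
  -- step 6 : bound the remainder
  have hdiff : ((A - S : ℝ) : ℂ) = (1 / (ℓ : ℂ) ^ 2) * R := by
    rw [Complex.ofReal_sub, hA]
    ring
  have habs2 : |A - S| = (1 / (ℓ : ℝ) ^ 2) * ‖R‖ := by
    rw [← Real.norm_eq_abs, ← Complex.norm_real, hdiff, norm_mul]
    congr 1
    rw [norm_div, norm_one, norm_pow]
    simp
  -- termwise bound on R
  have hterm : ∀ j : Fin k, ∀ j' ∈ Finset.univ.erase j,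
      ‖(u j * (starRingEnd ℂ) (u j')) *
        (D (f j - f j') * (starRingEnd ℂ) (D (f j - f j')))‖
      ≤ ((‖u j‖ ^ 2 + ‖u j'‖ ^ 2) / 2) *
          (1 / (4 * w (f j - f j') ^ 2)) := by
    intro j j' hj'
    have hne : j ≠ j' := fun h => (Finset.mem_erase.mp hj').1 h.symm
    have hwx : Δ ≤ w (f j - f j') := hsep' j j' hne
    have hwpos : 0 < w (f j - f j') := lt_of_lt_of_le hΔ hwx
    have hDb : ‖D (f j - f j')‖ ≤ 1 / (2 * w (f j - f j')) := D_bound ℓ hwpos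
    rw [norm_mul, norm_mul, norm_mul, Complex.norm_conj, Complex.norm_conj]
    have hD2 : ‖D (f j - f j')‖ * ‖D (f j - f j')‖
        ≤ 1 / (4 * w (f j - f j') ^ 2) := by
      calc ‖D (f j - f j')‖ * ‖D (f j - f j')‖
          ≤ (1 / (2 * w (f j - f j'))) * (1 / (2 * w (f j - f j'))) :=
            mul_le_mul hDb hDb (norm_nonneg _) (by positivity)
      _ = 1 / (4 * w (f j - f j') ^ 2) := by
            rw [div_mul_div_comm, one_mul]
            congr 1
            ring
    have huu : ‖u j‖ * ‖u j'‖
        ≤ (‖u j‖ ^ 2 + ‖u j'‖ ^ 2) / 2 := by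
      nlinarith [sq_nonneg (‖u j‖ - ‖u j'‖)]
    have h0 : (0 : ℝ) ≤ ‖u j‖ * ‖u j'‖ := by positivity
    calc ‖u j‖ * ‖u j'‖ *
        (‖D (f j - f j')‖ * ‖D (f j - f j')‖)
        ≤ ‖u j‖ * ‖u j'‖ * (1 / (4 * w (f j - f j') ^ 2)) :=
          mul_le_mul_of_nonneg_left hD2 h0
    _ ≤ ((‖u j‖ ^ 2 + ‖u j'‖ ^ 2) / 2) *
          (1 / (4 * w (f j - f j') ^ 2)) := by
          apply mul_le_mul_of_nonneg_right huu (by positivity)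
  have hRbound : ‖R‖ ≤ ∑ j, ∑ j' ∈ Finset.univ.erase j,
      ((‖u j‖ ^ 2 + ‖u j'‖ ^ 2) / 2) *
        (1 / (4 * w (f j - f j') ^ 2)) := by
    calc ‖R‖ ≤ ∑ j, ‖∑ j' ∈ Finset.univ.erase j,
        (u j * (starRingEnd ℂ) (u j')) *
          (D (f j - f j') * (starRingEnd ℂ) (D (f j - f j')))‖ :=
          norm_sum_le _ _
    _ ≤ ∑ j, ∑ j' ∈ Finset.univ.erase j, ‖(u j * (starRingEnd ℂ) (u j')) *
            (D (f j - f j') * (starRingEnd ℂ) (D (f j - f j')))‖ :=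
          Finset.sum_le_sum fun j _ => norm_sum_le _ _
    _ ≤ ∑ j, ∑ j' ∈ Finset.univ.erase j,
          ((‖u j‖ ^ 2 + ‖u j'‖ ^ 2) / 2) *
            (1 / (4 * w (f j - f j') ^ 2)) :=
          Finset.sum_le_sum fun j _ => Finset.sum_le_sum fun j' hj' => hterm j j' hj'
  -- split the double sum in two and use counting
  have hsum1 : ∑ j, ∑ j' ∈ Finset.univ.erase j,
      (‖u j‖ ^ 2 / 2) * (1 / (4 * w (f j - f j') ^ 2))
      ≤ (π ^ 2 / (3 * Δ ^ 2)) / 8 * S := by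
    calc ∑ j, ∑ j' ∈ Finset.univ.erase j,
        (‖u j‖ ^ 2 / 2) * (1 / (4 * w (f j - f j') ^ 2))
        = ∑ j, (‖u j‖ ^ 2 / 8) *
            ∑ j' ∈ Finset.univ.erase j, 1 / w (f j - f j') ^ 2 := by
          apply Finset.sum_congr rfl
          intro j _
          rw [Finset.mul_sum]
          apply Finset.sum_congr rfl
          intro j' _
          ring
    _ ≤ ∑ j, (‖u j‖ ^ 2 / 8) * (π ^ 2 / (3 * Δ ^ 2)) := by
          apply Finset.sum_le_sum
          intro j _
          apply mul_le_mul_of_nonneg_left (hB j) (by positivity)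
    _ = (π ^ 2 / (3 * Δ ^ 2)) / 8 * S := by
          rw [hSdef, Finset.mul_sum]
          exact Finset.sum_congr rfl fun j _ => by ring
  have hswap : ∑ j, ∑ j' ∈ Finset.univ.erase j,
      (‖u j'‖ ^ 2 / 2) * (1 / (4 * w (f j - f j') ^ 2))
      = ∑ j', ∑ j ∈ Finset.univ.erase j',
        (‖u j'‖ ^ 2 / 2) * (1 / (4 * w (f j - f j') ^ 2)) :=
    Finset.sum_comm' (fun x y => by
      simp only [Finset.mem_univ, Finset.mem_erase, true_and, and_true]
      exact ne_comm)
  have hsum2 : ∑ j, ∑ j' ∈ Finset.univ.erase j,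
      (‖u j'‖ ^ 2 / 2) * (1 / (4 * w (f j - f j') ^ 2))
      ≤ (π ^ 2 / (3 * Δ ^ 2)) / 8 * S := by
    rw [hswap]
    calc ∑ j', ∑ j ∈ Finset.univ.erase j',
        (‖u j'‖ ^ 2 / 2) * (1 / (4 * w (f j - f j') ^ 2))
        = ∑ j', (‖u j'‖ ^ 2 / 8) *
            ∑ j ∈ Finset.univ.erase j', 1 / w (f j' - f j) ^ 2 := by
          apply Finset.sum_congr rfl
          intro j' _
          rw [Finset.mul_sum]
          apply Finset.sum_congr rfl
          intro j _
          rw [show w (f j - f j') = w (f j' - f j) by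
            rw [show f j - f j' = -(f j' - f j) by ring, w_neg]]
          ring
    _ ≤ ∑ j', (‖u j'‖ ^ 2 / 8) * (π ^ 2 / (3 * Δ ^ 2)) := by
          apply Finset.sum_le_sum
          intro j' _
          exact mul_le_mul_of_nonneg_left (hB j') (by positivity)
    _ = (π ^ 2 / (3 * Δ ^ 2)) / 8 * S := by
          rw [hSdef, Finset.mul_sum]
          exact Finset.sum_congr rfl fun j _ => by ring
  have hsplit2 : ∑ j, ∑ j' ∈ Finset.univ.erase j,
      ((‖u j‖ ^ 2 + ‖u j'‖ ^ 2) / 2) * (1 / (4 * w (f j - f j') ^ 2))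
      = (∑ j, ∑ j' ∈ Finset.univ.erase j,
          (‖u j‖ ^ 2 / 2) * (1 / (4 * w (f j - f j') ^ 2)))
        + ∑ j, ∑ j' ∈ Finset.univ.erase j,
          (‖u j'‖ ^ 2 / 2) * (1 / (4 * w (f j - f j') ^ 2)) := by
    rw [← Finset.sum_add_distrib]
    apply Finset.sum_congr rfl
    intro j _
    rw [← Finset.sum_add_distrib]
    apply Finset.sum_congr rfl
    intro j' _
    ring
  calc |A - S| = (1 / (ℓ : ℝ) ^ 2) * ‖R‖ := habs2
  _ ≤ (1 / (ℓ : ℝ) ^ 2) * (∑ j, ∑ j' ∈ Finset.univ.erase j,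
        ((‖u j‖ ^ 2 + ‖u j'‖ ^ 2) / 2) *
          (1 / (4 * w (f j - f j') ^ 2))) :=
      mul_le_mul_of_nonneg_left hRbound (by positivity)
  _ ≤ (1 / (ℓ : ℝ) ^ 2) * ((π ^ 2 / (3 * Δ ^ 2)) / 8 * S + (π ^ 2 / (3 * Δ ^ 2)) / 8 * S) := by
      apply mul_le_mul_of_nonneg_left _ (by positivity)
      rw [hsplit2]
      exact add_le_add hsum1 hsum2
  _ = (π ^ 2 / (12 * (ℓ : ℝ) ^ 2 * Δ ^ 2)) * S := by
      field_simp
      ring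
end
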